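/- arXiv:0708.2130 — 6 statements merged into one kernel-verified Lean document; each statement's English description precedes it below -/
import Mathlib

section
/- Let F_q be a finite field with q elements and A, B, C, D ⊆ F_q. If T(A,B,C,D) denotes the number of quadruples (a,b,c,d) ∈ A×B×C×D with a + b = cd, then |T(A,B,C,D) - |A||B||C||D|/(q-1)| ≤ 2(q·|A||B||C||D|)^{1/2}. -/
open Finset

set_option linter.unusedSectionVars false

namespace CountACD

variable {F : Type} [Field F] [Fintype F] [DecidableEq F]

noncomputable def ee (F : Type) [Field F] [Fintype F] : AddChar F ℂ :=
  AddChar.FiniteField.primitiveChar_to_Complex F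

lemma ee_prim : (ee F).IsPrimitive :=
  AddChar.FiniteField.primitiveChar_to_Complex_isPrimitive F

lemma rc_pos : 0 < ringChar F :=
  Nat.pos_of_ne_zero (CharP.ringChar_ne_zero_of_finite F)

lemma conj_ee (x : F) : (starRingEnd ℂ) (ee F x) = ee F (-x) := by
  rw [AddChar.starComp_apply rc_pos, AddChar.inv_apply]

lemma orth (y : F) :
    ∑ t : F, ee F (t * y) = if y = 0 then (Fintype.card F : ℂ) else 0 := by
  rw [AddChar.sum_mulShift y ee_prim]
  split_ifs <;> simp

lemma normSq_cast (z : ℂ) : ((‖z‖ ^ 2 : ℝ) : ℂ) = z * (starRingEnd ℂ) z := by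
  rw [Complex.mul_conj]
  norm_cast
  rw [Complex.sq_norm]

lemma parseval (X : Finset F) :
    ∑ t : F, ‖∑ x ∈ X, ee F (t * x)‖ ^ 2 = (Fintype.card F : ℝ) * X.card := by
  have hC : ∑ t : F, ((‖∑ x ∈ X, ee F (t * x)‖ ^ 2 : ℝ) : ℂ)
      = ((Fintype.card F : ℝ) * (X.card : ℝ) : ℂ) := by
    have h1 : ∀ t : F, ((‖∑ x ∈ X, ee F (t * x)‖ ^ 2 : ℝ) : ℂ)
        = ∑ x ∈ X, ∑ y ∈ X, ee F (t * (x - y)) := by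
      intro t
      rw [normSq_cast, map_sum, Finset.sum_mul_sum]
      refine Finset.sum_congr rfl fun x _ => Finset.sum_congr rfl fun y _ => ?_
      rw [conj_ee, ← AddChar.map_add_eq_mul]
      congr 1
      ring
    simp_rw [h1]
    rw [Finset.sum_comm]
    have h2 : ∀ x ∈ X, ∑ t : F, ∑ y ∈ X, ee F (t * (x - y))
        = (Fintype.card F : ℂ) := by
      intro x hx
      rw [Finset.sum_comm]
      have : ∀ y ∈ X, ∑ t : F, ee F (t * (x - y))
          = if x - y = 0 then (Fintype.card F : ℂ) else 0 :=
        fun y _ => orth _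
      rw [Finset.sum_congr rfl this]
      simp only [sub_eq_zero]
      rw [Finset.sum_ite_eq X x _, if_pos hx]
    rw [Finset.sum_congr rfl h2, Finset.sum_const, nsmul_eq_mul]
    push_cast
    ring
  exact_mod_cast hC

lemma hterm (t a b c d : F) :
    ee F (t * a) * ee F (t * b) * ee F (-(t * (c * d))) = ee F (t * (a + b - c * d)) := by
  rw [show t * (a + b - c * d) = t * a + (t * b + -(t * (c * d))) by ring,
    AddChar.map_add_eq_mul, AddChar.map_add_eq_mul, mul_assoc]

lemma key (A B C D : Finset F) :
    (Fintype.card F : ℂ) *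
      (((A ×ˢ B ×ˢ C ×ˢ D).filter
        (fun x => x.1 + x.2.1 = x.2.2.1 * x.2.2.2)).card : ℂ)
    = ∑ t : F, (∑ a ∈ A, ee F (t * a)) * (∑ b ∈ B, ee F (t * b)) *
        (∑ c ∈ C, ∑ d ∈ D, ee F (-(t * (c * d)))) := by
  have hL : (Fintype.card F : ℂ) *
      (((A ×ˢ B ×ˢ C ×ˢ D).filter
        (fun x => x.1 + x.2.1 = x.2.2.1 * x.2.2.2)).card : ℂ)
      = ∑ x ∈ A ×ˢ B ×ˢ C ×ˢ D, ∑ t : F,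
          ee F (t * (x.1 + x.2.1 - x.2.2.1 * x.2.2.2)) := by
    have : ∀ x ∈ A ×ˢ B ×ˢ C ×ˢ D, ∑ t : F,
        ee F (t * (x.1 + x.2.1 - x.2.2.1 * x.2.2.2))
        = if x.1 + x.2.1 = x.2.2.1 * x.2.2.2 then (Fintype.card F : ℂ) else 0 := by
      intro x _
      rw [orth]
      congr 1
      simp [sub_eq_zero]
    rw [Finset.sum_congr rfl this, Finset.sum_ite, Finset.sum_const, Finset.sum_const]
    simp [mul_comm]
  rw [hL, Finset.sum_comm]
  refine Finset.sum_congr rfl fun t _ => ?_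
  rw [Finset.sum_mul_sum A B (fun a => ee F (t * a)) (fun b => ee F (t * b)),
    Finset.sum_mul, Finset.sum_product]
  refine Finset.sum_congr rfl fun a _ => ?_
  rw [Finset.sum_mul, Finset.sum_product]
  refine Finset.sum_congr rfl fun b _ => ?_
  rw [Finset.mul_sum, Finset.sum_product]
  refine Finset.sum_congr rfl fun c _ => ?_
  rw [Finset.mul_sum]
  exact Finset.sum_congr rfl fun d _ => (hterm t a b c d).symm

lemma V_bound (t : F) (ht : t ≠ 0) (C D : Finset F) :
    ‖∑ c ∈ C, ∑ d ∈ D, ee F (-(t * (c * d)))‖ ≤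
      Real.sqrt ((Fintype.card F : ℝ) * C.card * D.card) := by
  rw [Finset.sum_comm]
  set g : F → ℂ := fun d => ∑ c ∈ C, ee F (-(t * (c * d))) with hg
  have h5 : ∑ d : F, ‖g d‖ ^ 2 = (Fintype.card F : ℝ) * C.card := by
    have himg : ∀ d : F, g d = ∑ x ∈ C.image (fun c => -t * c), ee F (d * x) := by
      intro d
      rw [Finset.sum_image (fun x _ y _ h => mul_left_cancel₀ (neg_ne_zero.2 ht) h)]
      refine Finset.sum_congr rfl fun c _ => ?_
      congr 1
      ring
    simp_rw [himg]
    rw [parseval, Finset.card_image_of_injective _ (mul_right_injective₀ (neg_ne_zero.2 ht))]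
  have h2 : ‖∑ d ∈ D, g d‖ ≤ ∑ d ∈ D, ‖g d‖ := norm_sum_le _ _
  have h3 : (∑ d ∈ D, ‖g d‖) ^ 2 ≤ (D.card : ℝ) * ∑ d ∈ D, ‖g d‖ ^ 2 :=
    sq_sum_le_card_mul_sum_sq
  have h4 : ∑ d ∈ D, ‖g d‖ ^ 2 ≤ ∑ d : F, ‖g d‖ ^ 2 :=
    Finset.sum_le_sum_of_subset_of_nonneg (Finset.subset_univ D)
      (fun i _ _ => by positivity)
  have h6 : ‖∑ d ∈ D, g d‖ ^ 2 ≤ (Fintype.card F : ℝ) * C.card * D.card := by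
    calc ‖∑ d ∈ D, g d‖ ^ 2 ≤ (∑ d ∈ D, ‖g d‖) ^ 2 := by
          apply pow_le_pow_left₀ (norm_nonneg _) h2
      _ ≤ (D.card : ℝ) * ∑ d ∈ D, ‖g d‖ ^ 2 := h3
      _ ≤ (D.card : ℝ) * ((Fintype.card F : ℝ) * C.card) := by
          rw [← h5]
          exact mul_le_mul_of_nonneg_left h4 (by positivity)
      _ = (Fintype.card F : ℝ) * C.card * D.card := by ring
  rw [← Real.sqrt_sq (norm_nonneg (∑ d ∈ D, g d))]
  exact Real.sqrt_le_sqrt h6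

lemma parseval_erase (X : Finset F) :
    ∑ t ∈ Finset.univ.erase (0 : F), ‖∑ x ∈ X, ee F (t * x)‖ ^ 2
      = (Fintype.card F : ℝ) * X.card - (X.card : ℝ) ^ 2 := by
  have h0 : ‖∑ x ∈ X, ee F ((0 : F) * x)‖ ^ 2 = (X.card : ℝ) ^ 2 := by
    simp [zero_mul]
  have := Finset.sum_erase_add Finset.univ
    (fun t : F => ‖∑ x ∈ X, ee F (t * x)‖ ^ 2) (Finset.mem_univ (0 : F))
  rw [parseval] at this
  rw [← this, h0]
  ring

lemma main_bound (A B C D : Finset F) :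
    |(Fintype.card F : ℝ) *
        (((A ×ˢ B ×ˢ C ×ˢ D).filter
          (fun x => x.1 + x.2.1 = x.2.2.1 * x.2.2.2)).card : ℝ)
      - (A.card : ℝ) * B.card * C.card * D.card|
    ≤ Real.sqrt ((Fintype.card F : ℝ) * C.card * D.card) *
        (Real.sqrt ((Fintype.card F : ℝ) * A.card - (A.card : ℝ) ^ 2) *
         Real.sqrt ((Fintype.card F : ℝ) * B.card - (B.card : ℝ) ^ 2)) := by
  set f : F → ℂ := fun t => (∑ a ∈ A, ee F (t * a)) * (∑ b ∈ B, ee F (t * b)) *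
        (∑ c ∈ C, ∑ d ∈ D, ee F (-(t * (c * d)))) with hf
  have hW : ((((Fintype.card F : ℝ) *
        (((A ×ˢ B ×ˢ C ×ˢ D).filter
          (fun x => x.1 + x.2.1 = x.2.2.1 * x.2.2.2)).card : ℝ)
      - (A.card : ℝ) * B.card * C.card * D.card : ℝ)) : ℂ)
      = ∑ t ∈ Finset.univ.erase (0 : F), f t := by
    have hkey := key A B C D
    have hsplit := Finset.sum_erase_add Finset.univ f (Finset.mem_univ (0 : F))
    have hf0 : f 0 = (A.card : ℂ) * B.card * (C.card * D.card) := by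
      simp [hf, zero_mul]
    push_cast
    rw [hkey, ← hsplit, hf0]
    ring
  calc |(Fintype.card F : ℝ) *
        (((A ×ˢ B ×ˢ C ×ˢ D).filter
          (fun x => x.1 + x.2.1 = x.2.2.1 * x.2.2.2)).card : ℝ)
      - (A.card : ℝ) * B.card * C.card * D.card|
      = ‖∑ t ∈ Finset.univ.erase (0 : F), f t‖ := by
        rw [← hW, Complex.norm_real, Real.norm_eq_abs]
    _ ≤ ∑ t ∈ Finset.univ.erase (0 : F), ‖f t‖ := norm_sum_le _ _
    _ = ∑ t ∈ Finset.univ.erase (0 : F),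
          ‖∑ a ∈ A, ee F (t * a)‖ * ‖∑ b ∈ B, ee F (t * b)‖ *
            ‖∑ c ∈ C, ∑ d ∈ D, ee F (-(t * (c * d)))‖ := by
        simp [hf, norm_mul]
    _ ≤ ∑ t ∈ Finset.univ.erase (0 : F),
          ‖∑ a ∈ A, ee F (t * a)‖ * ‖∑ b ∈ B, ee F (t * b)‖ *
            Real.sqrt ((Fintype.card F : ℝ) * C.card * D.card) := by
        refine Finset.sum_le_sum fun t ht => ?_
        exact mul_le_mul_of_nonneg_left
          (V_bound t (Finset.mem_erase.1 ht).1 C D) (by positivity)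
    _ = Real.sqrt ((Fintype.card F : ℝ) * C.card * D.card) *
          ∑ t ∈ Finset.univ.erase (0 : F),
            ‖∑ a ∈ A, ee F (t * a)‖ * ‖∑ b ∈ B, ee F (t * b)‖ := by
        rw [Finset.mul_sum]
        exact Finset.sum_congr rfl fun t _ => by ring
    _ ≤ Real.sqrt ((Fintype.card F : ℝ) * C.card * D.card) *
          (Real.sqrt (∑ t ∈ Finset.univ.erase (0 : F), ‖∑ a ∈ A, ee F (t * a)‖ ^ 2) *
           Real.sqrt (∑ t ∈ Finset.univ.erase (0 : F), ‖∑ b ∈ B, ee F (t * b)‖ ^ 2)) := by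
        exact mul_le_mul_of_nonneg_left
          (Real.sum_mul_le_sqrt_mul_sqrt _ _ _) (Real.sqrt_nonneg _)
    _ = Real.sqrt ((Fintype.card F : ℝ) * C.card * D.card) *
        (Real.sqrt ((Fintype.card F : ℝ) * A.card - (A.card : ℝ) ^ 2) *
         Real.sqrt ((Fintype.card F : ℝ) * B.card - (B.card : ℝ) ^ 2)) := by
        rw [parseval_erase, parseval_erase]

set_option maxHeartbeats 1000000 in
lemma final_arith (q T a b c d : ℝ) (hq : 2 ≤ q) (ha : 1 ≤ a) (hb : 1 ≤ b)
    (hc : 1 ≤ c) (hd : 1 ≤ d)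
    (haq : a ≤ q) (hbq : b ≤ q) (hcq : c ≤ q) (hdq : d ≤ q)
    (hT : |q * T - a * b * c * d| ≤
      Real.sqrt (q * c * d) * (Real.sqrt (q * a - a ^ 2) * Real.sqrt (q * b - b ^ 2))) :
    |T - a * b * c * d / (q - 1)| ≤ 2 * Real.sqrt (q * (a * b * c * d)) := by
  have hq0 : (0:ℝ) < q := by linarith
  have hq1 : (0:ℝ) < q - 1 := by linarith
  set r := Real.sqrt q with hrdef
  set s := Real.sqrt (a * b * c * d) with hsdef
  set u := Real.sqrt ((q - a) * (q - b)) with hudef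
  set v := Real.sqrt (a * b) with hvdef
  have hr2 : r ^ 2 = q := Real.sq_sqrt (le_of_lt hq0)
  have hs2 : s ^ 2 = a * b * c * d := Real.sq_sqrt (by positivity)
  have hr0 : 0 ≤ r := Real.sqrt_nonneg _
  have hs0 : 0 ≤ s := Real.sqrt_nonneg _
  have hu0 : 0 ≤ u := Real.sqrt_nonneg _
  have hv0 : 0 ≤ v := Real.sqrt_nonneg _
  have hr1 : 1 ≤ r := by nlinarith
  have hab1 : 1 ≤ a * b := by nlinarith
  have habc1 : 1 ≤ a * b * c := by nlinarith [hab1]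
  have habcd : 1 ≤ a * b * c * d := by nlinarith [habc1]
  have hs1 : 1 ≤ s := by nlinarith [hs2, habcd]
  -- rewrite the error term
  have hE : Real.sqrt (q * c * d) * (Real.sqrt (q * a - a ^ 2) * Real.sqrt (q * b - b ^ 2))
      = s * (r * u) := by
    rw [show q * a - a ^ 2 = a * (q - a) by ring, show q * b - b ^ 2 = b * (q - b) by ring]
    rw [hsdef, hrdef, hudef,
      ← Real.sqrt_mul (mul_nonneg (by linarith) (by linarith) :
          (0:ℝ) ≤ a * (q - a)),
      ← Real.sqrt_mul (by positivity : (0:ℝ) ≤ q * c * d),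
      ← Real.sqrt_mul (le_of_lt hq0),
      ← Real.sqrt_mul (by positivity : (0:ℝ) ≤ a * b * c * d)]
    congr 1
    ring
  have hu : u ≤ (2 * q - a - b) / 2 := by
    have h1 : (q - a) * (q - b) ≤ ((2 * q - a - b) / 2) ^ 2 := by nlinarith [sq_nonneg (a - b)]
    calc u ≤ Real.sqrt (((2 * q - a - b) / 2) ^ 2) := Real.sqrt_le_sqrt h1
      _ = (2 * q - a - b) / 2 := Real.sqrt_sq (by linarith)
  have hv : v ≤ (a + b) / 2 := by
    have h1 : a * b ≤ ((a + b) / 2) ^ 2 := by nlinarith [sq_nonneg (a - b)]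
    calc v ≤ Real.sqrt (((a + b) / 2) ^ 2) := Real.sqrt_le_sqrt h1
      _ = (a + b) / 2 := Real.sqrt_sq (by linarith)
  have hsqv : s ≤ q * v := by
    have hcd : c * d ≤ q ^ 2 := by nlinarith
    have h1 : a * b * c * d ≤ (a * b) * q ^ 2 := by
      nlinarith [mul_le_mul_of_nonneg_left hcd (show (0:ℝ) ≤ a * b by positivity)]
    calc s ≤ Real.sqrt ((a * b) * q ^ 2) := Real.sqrt_le_sqrt h1
      _ = v * q := by
          rw [hvdef, Real.sqrt_mul (by positivity), Real.sqrt_sq (le_of_lt hq0)]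
      _ = q * v := by ring
  -- the key linear-in-(a+b) inequality
  have e1 : q ≤ r * (q ^ 2 - 1) := by nlinarith
  have e2 : q ≤ 2 * r * (q - 1) := by nlinarith
  have hkey2 : r * (2 * q - (a + b)) * (q - 1) + q * (a + b) ≤ 4 * r * q * (q - 1) := by
    have hw2 : 2 ≤ a + b := by linarith
    have hw2q : a + b ≤ 2 * q := by linarith
    nlinarith [mul_nonneg (sub_nonneg.2 hw2q) (sub_nonneg.2 e1),
      mul_nonneg (sub_nonneg.2 hw2) (sub_nonneg.2 e2)]
  have h8 : r * u * (q - 1) + s ≤ 2 * r * q * (q - 1) := by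
    have p1 : r * u * (q - 1) ≤ r * (q - 1) * ((2 * q - a - b) / 2) := by
      have := mul_le_mul_of_nonneg_left hu (by positivity : (0:ℝ) ≤ r * (q - 1))
      nlinarith [this]
    have p2 : s ≤ q * ((a + b) / 2) := by
      have := mul_le_mul_of_nonneg_left hv (le_of_lt hq0)
      linarith
    nlinarith [hkey2]
  have h9 : s * (r * u) * (q - 1) + s ^ 2 ≤ 2 * r * q * (q - 1) * s := by
    have := mul_le_mul_of_nonneg_left h8 hs0
    nlinarith [this]
  -- bound |T - N/q|
  have hT1 : |T - a * b * c * d / q| ≤ s * (r * u) / q := by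
    have h1 : |q * T - a * b * c * d| ≤ s * (r * u) := hE ▸ hT
    have h2 : T - a * b * c * d / q = (q * T - a * b * c * d) / q := by
      field_simp
    rw [h2, abs_div, abs_of_pos hq0]
    gcongr
  have hT2 : |a * b * c * d / q - a * b * c * d / (q - 1)| = s ^ 2 / (q * (q - 1)) := by
    have h3 : a * b * c * d / q - a * b * c * d / (q - 1) = -(s ^ 2 / (q * (q - 1))) := by
      rw [hs2]; field_simp; ring
    rw [h3, abs_neg, abs_of_nonneg (by positivity)]
  have hfinal : s * (r * u) / q + s ^ 2 / (q * (q - 1)) ≤ 2 * (r * s) := by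
    have hne1 : q ≠ 0 := ne_of_gt hq0
    have hne2 : q * (q - 1) ≠ 0 := by positivity
    calc s * (r * u) / q + s ^ 2 / (q * (q - 1))
        = (s * (r * u) * (q - 1) + s ^ 2) / (q * (q - 1)) := by field_simp
      _ ≤ (2 * r * q * (q - 1) * s) / (q * (q - 1)) := by gcongr
      _ = 2 * (r * s) := by field_simp
  have hRHS : 2 * Real.sqrt (q * (a * b * c * d)) = 2 * (r * s) := by
    rw [Real.sqrt_mul (le_of_lt hq0)]
  calc |T - a * b * c * d / (q - 1)|
      ≤ |T - a * b * c * d / q| + |a * b * c * d / q - a * b * c * d / (q - 1)| :=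
        abs_sub_le _ _ _
    _ ≤ s * (r * u) / q + s ^ 2 / (q * (q - 1)) := by rw [hT2]; linarith [hT1]
    _ ≤ 2 * (r * s) := hfinal
    _ = 2 * Real.sqrt (q * (a * b * c * d)) := hRHS.symm

end CountACD

/-- For a finite field `F` with `q` elements and subsets `A, B, C, D`,
the number `T` of quadruples `(a,b,c,d) ∈ A×B×C×D` with `a + b = cd` satisfies
`|T - |A||B||C||D|/(q-1)| ≤ 2(q|A||B||C||D|)^{1/2}`. -/
theorem count_a_add_b_eq_cd (F : Type) [Field F] [Fintype F] [DecidableEq F]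
    (A B C D : Finset F) :
    abs ((((A ×ˢ B ×ˢ C ×ˢ D).filter
        (fun x => x.1 + x.2.1 = x.2.2.1 * x.2.2.2)).card : ℝ) -
      (A.card * B.card * C.card * D.card : ℝ) / ((Fintype.card F : ℝ) - 1)) ≤
    2 * Real.sqrt ((Fintype.card F : ℝ) * (A.card * B.card * C.card * D.card)) := by
  rcases A.eq_empty_or_nonempty with rfl | hA
  · simp
  rcases B.eq_empty_or_nonempty with rfl | hB
  · simp
  rcases C.eq_empty_or_nonempty with rfl | hC
  · simp
  rcases D.eq_empty_or_nonempty with rfl | hD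
  · simp
  have hq : 2 ≤ (Fintype.card F : ℝ) := by exact_mod_cast Fintype.one_lt_card
  have hcard : ∀ X : Finset F, (X.card : ℝ) ≤ (Fintype.card F : ℝ) := by
    intro X
    exact_mod_cast Finset.card_le_univ X
  exact CountACD.final_arith (Fintype.card F) _ _ _ _ _ hq
    (by exact_mod_cast hA.card_pos) (by exact_mod_cast hB.card_pos)
    (by exact_mod_cast hC.card_pos) (by exact_mod_cast hD.card_pos)
    (hcard A) (hcard B) (hcard C) (hcard D)
    (CountACD.main_bound A B C D)
end

section
/- Let F_q be a finite field with q elements. There exists an absolute constant C > 0 such that for any sets A, B, C, D ⊆ F_q with |A||B||C||D| ≥ C·q^3 and any λ ∈ F_q*, there exist a ∈ A, b ∈ B, c ∈ C, d ∈ D with ab + cd = λ. -/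
open Finset

namespace SolvAux
set_option linter.unusedSectionVars false
set_option maxHeartbeats 1600000

variable {F : Type} [Field F] [Fintype F] [DecidableEq F]

noncomputable instance : Fintype (MulChar F ℂ) := Fintype.ofFinite _

lemma henrou : HasEnoughRootsOfUnity ℂ (Monoid.exponent Fˣ) := by
  have : NeZero ((Monoid.exponent Fˣ : ℕ) : ℂ) := by
    constructor
    exact_mod_cast Monoid.exponent_ne_zero.mpr (Monoid.ExponentExists.of_finite)
  infer_instance

lemma card_mulChar : Fintype.card (MulChar F ℂ) = Fintype.card F - 1 := by
  haveI := henrou (F := F)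
  have h := MulChar.card_eq_card_units_of_hasEnoughRootsOfUnity F ℂ
  simpa [Nat.card_eq_fintype_card, Fintype.card_units] using h

lemma sum_mulChar_eq (t : F) :
    ∑ χ : MulChar F ℂ, χ t = if t = 1 then ((Fintype.card F : ℂ) - 1) else 0 := by
  haveI := henrou (F := F)
  split_ifs with ht
  · subst ht
    simp only [map_one, Finset.sum_const, Finset.card_univ, nsmul_eq_mul, mul_one]
    rw [card_mulChar]
    have : (1 : ℕ) ≤ Fintype.card F := Fintype.card_pos
    push_cast [Nat.cast_sub this]
    ring
  · by_cases hu : IsUnit t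
    · obtain ⟨χ₀, hχ₀⟩ := MulChar.exists_apply_ne_one_of_hasEnoughRootsOfUnity F ℂ ht
      refine eq_zero_of_mul_eq_self_left hχ₀ ?_
      simp only [Finset.mul_sum, ← MulChar.mul_apply]
      exact Fintype.sum_bijective _ (Group.mulLeft_bijective χ₀) _ _ fun χ' ↦ rfl
    · simp [MulChar.map_nonunit _ hu]


lemma norm_mulChar_eq_one (χ : MulChar F ℂ) {t : F} (ht : t ≠ 0) : ‖χ t‖ = 1 := by
  have hq : Fintype.card F - 1 ≠ 0 := by
    have : 1 < Fintype.card F := Fintype.one_lt_card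
    omega
  refine Complex.norm_eq_one_of_pow_eq_one ?_ hq
  rw [← map_pow, FiniteField.pow_card_sub_one_eq_one t ht, MulChar.map_one]

lemma norm_mulChar_le_one (χ : MulChar F ℂ) (t : F) : ‖χ t‖ ≤ 1 := by
  by_cases ht : t = 0
  · simp [ht, MulChar.map_zero]
  · exact (norm_mulChar_eq_one χ ht).le

lemma parseval (X : Finset F) (hX : (0:F) ∉ X) :
    ∑ χ : MulChar F ℂ, ‖∑ x ∈ X, χ x‖ ^ 2 = ((Fintype.card F : ℝ) - 1) * X.card := by
  have key : ∑ χ : MulChar F ℂ, (∑ x ∈ X, χ x) * (starRingEnd ℂ) (∑ x ∈ X, χ x)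
      = ((Fintype.card F : ℂ) - 1) * X.card := by
    have expand : ∀ χ : MulChar F ℂ, (∑ x ∈ X, χ x) * (starRingEnd ℂ) (∑ x ∈ X, χ x)
        = ∑ x ∈ X, ∑ y ∈ X, χ (x * y⁻¹) := by
      intro χ
      rw [map_sum, Finset.sum_mul_sum]
      refine Finset.sum_congr rfl fun x hx => Finset.sum_congr rfl fun y hy => ?_
      rw [map_mul, ← MulChar.inv_apply', ← MulChar.star_apply']
      rfl
    simp only [expand]
    rw [Finset.sum_comm]
    have step : ∀ x ∈ X, ∑ y ∈ X, ∑ χ : MulChar F ℂ, χ (x * y⁻¹)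
        = ((Fintype.card F : ℂ) - 1) := by
      intro x hx
      have : ∀ y ∈ X, ∑ χ : MulChar F ℂ, χ (x * y⁻¹)
          = if y = x then ((Fintype.card F : ℂ) - 1) else 0 := by
        intro y hy
        rw [sum_mulChar_eq]
        congr 1
        have hy0 : y ≠ 0 := fun h => hX (h ▸ hy)
        simp only [eq_iff_iff]
        constructor
        · intro h
          field_simp at h
          exact h.symm
        · rintro rfl
          field_simp
      calc ∑ y ∈ X, ∑ χ : MulChar F ℂ, χ (x * y⁻¹)
          = ∑ y ∈ X, if y = x then ((Fintype.card F : ℂ) - 1) else 0 :=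
            Finset.sum_congr rfl this
        _ = _ := by rw [Finset.sum_ite_eq' X x]; simp [hx]
    have swap : ∀ x ∈ X, ∑ χ : MulChar F ℂ, ∑ y ∈ X, χ (x * y⁻¹)
        = ((Fintype.card F : ℂ) - 1) := by
      intro x hx
      rw [Finset.sum_comm]
      exact step x hx
    rw [Finset.sum_congr rfl swap, Finset.sum_const, nsmul_eq_mul, mul_comm]
  have lhs : ∀ χ : MulChar F ℂ, (∑ x ∈ X, χ x) * (starRingEnd ℂ) (∑ x ∈ X, χ x)
      = ((‖∑ x ∈ X, χ x‖ ^ 2 : ℝ) : ℂ) := by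
    intro χ
    rw [Complex.mul_conj, Complex.normSq_eq_norm_sq]
  simp only [lhs] at key
  apply Complex.ofReal_injective
  push_cast
  exact_mod_cast key


lemma conj_jacobiSum (χ φ : MulChar F ℂ) :
    (starRingEnd ℂ) (jacobiSum χ φ) = jacobiSum χ⁻¹ φ⁻¹ := by
  rw [jacobiSum, map_sum]
  refine Finset.sum_congr rfl fun x _ => ?_
  rw [map_mul]
  congr 1 <;> rw [← MulChar.star_apply'] <;> rfl

lemma one_le_sqrt_card : (1:ℝ) ≤ Real.sqrt (Fintype.card F) := by
  rw [show (1:ℝ) = Real.sqrt 1 by simp]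
  apply Real.sqrt_le_sqrt
  have : 1 < Fintype.card F := Fintype.one_lt_card
  exact_mod_cast this.le

lemma norm_jacobiSum_le {χ φ : MulChar F ℂ} (h : ¬(χ = 1 ∧ φ = 1)) :
    ‖jacobiSum χ φ‖ ≤ Real.sqrt (Fintype.card F) := by
  by_cases hχ : χ = 1
  · have hφ : φ ≠ 1 := fun hh => h ⟨hχ, hh⟩
    rw [hχ, jacobiSum_one_nontrivial hφ]
    simpa using one_le_sqrt_card (F := F)
  · by_cases hφ : φ = 1
    · rw [hφ, jacobiSum_comm, jacobiSum_one_nontrivial hχ]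
      simpa using one_le_sqrt_card (F := F)
    · by_cases hm : χ * φ = 1
      · have : φ = χ⁻¹ := by
          rw [eq_inv_iff_mul_eq_one, mul_comm]
          exact hm
        rw [this, jacobiSum_nontrivial_inv hχ]
        rw [norm_neg, norm_mulChar_eq_one χ (by norm_num : (-1:F) ≠ 0)]
        exact one_le_sqrt_card
      · have hring : ringChar ℂ ≠ ringChar F := by
          rw [ringChar.eq_zero]
          exact (CharP.ringChar_ne_zero_of_finite F).symm
        have key := jacobiSum_mul_jacobiSum_inv hring hχ hφ hm
        rw [← conj_jacobiSum, Complex.mul_conj] at key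
        have : ‖jacobiSum χ φ‖^2 = (Fintype.card F : ℝ) := by
          have h2 : (Complex.normSq (jacobiSum χ φ) : ℝ) = (Fintype.card F : ℝ) := by
            exact_mod_cast key
          rw [← h2, Complex.normSq_eq_norm_sq]
        rw [← this]
        rw [Real.sqrt_sq (norm_nonneg _)]


lemma pointwise {lam : F} (hlam : lam ≠ 0) {a b c d : F}
    (ha : a ≠ 0) (hb : b ≠ 0) (hc : c ≠ 0) (hd : d ≠ 0) :
    ∑ χ : MulChar F ℂ, ∑ φ : MulChar F ℂ,
      χ a * χ b * φ c * φ d * (χ⁻¹ lam * φ⁻¹ lam * jacobiSum χ⁻¹ φ⁻¹)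
    = if a * b + c * d = lam then ((Fintype.card F : ℂ) - 1) ^ 2 else 0 := by
  set K : ℂ := (Fintype.card F : ℂ) - 1 with hK
  have expand : ∀ χ φ : MulChar F ℂ,
      χ a * χ b * φ c * φ d * (χ⁻¹ lam * φ⁻¹ lam * jacobiSum χ⁻¹ φ⁻¹)
      = ∑ x : F, χ (a * b * lam⁻¹ * x⁻¹) * φ (c * d * lam⁻¹ * (1 - x)⁻¹) := by
    intro χ φ
    simp only [jacobiSum, Finset.mul_sum]
    refine Finset.sum_congr rfl fun x _ => ?_
    simp only [map_mul, MulChar.inv_apply']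
    ring
  simp only [expand]
  have swap : ∑ χ : MulChar F ℂ, ∑ φ : MulChar F ℂ, ∑ x : F,
      χ (a * b * lam⁻¹ * x⁻¹) * φ (c * d * lam⁻¹ * (1 - x)⁻¹)
      = ∑ x : F, ∑ χ : MulChar F ℂ, ∑ φ : MulChar F ℂ,
      χ (a * b * lam⁻¹ * x⁻¹) * φ (c * d * lam⁻¹ * (1 - x)⁻¹) := by
    rw [show (∑ χ : MulChar F ℂ, ∑ φ : MulChar F ℂ, ∑ x : F,
        χ (a * b * lam⁻¹ * x⁻¹) * φ (c * d * lam⁻¹ * (1 - x)⁻¹))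
        = ∑ χ : MulChar F ℂ, ∑ x : F, ∑ φ : MulChar F ℂ,
        χ (a * b * lam⁻¹ * x⁻¹) * φ (c * d * lam⁻¹ * (1 - x)⁻¹) from
      Finset.sum_congr rfl fun χ _ => Finset.sum_comm]
    exact Finset.sum_comm
  rw [swap]
  have inner : ∀ x : F, ∑ χ : MulChar F ℂ, ∑ φ : MulChar F ℂ,
      χ (a * b * lam⁻¹ * x⁻¹) * φ (c * d * lam⁻¹ * (1 - x)⁻¹)
      = (if a * b * lam⁻¹ * x⁻¹ = 1 then K else 0) *
        (if c * d * lam⁻¹ * (1 - x)⁻¹ = 1 then K else 0) := by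
    intro x
    rw [← Finset.sum_mul_sum, sum_mulChar_eq, sum_mulChar_eq]
  simp only [inner]
  have hu : a * b * lam⁻¹ ≠ 0 := by
    simp [ha, hb, hlam]
  have step2 : ∀ x : F,
      (if a * b * lam⁻¹ * x⁻¹ = 1 then K else 0) *
        (if c * d * lam⁻¹ * (1 - x)⁻¹ = 1 then K else 0)
      = if x = a * b * lam⁻¹ then
          (if c * d * lam⁻¹ * (1 - x)⁻¹ = 1 then K * K else 0) else 0 := by
    intro x
    by_cases hx : x = a * b * lam⁻¹
    · have hP : a * b * lam⁻¹ * x⁻¹ = 1 := by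
        rw [hx]
        field_simp
      rw [if_pos hP, if_pos hx]
      split_ifs <;> ring
    · have hP : ¬ (a * b * lam⁻¹ * x⁻¹ = 1) := by
        intro h
        apply hx
        have hx0 : x ≠ 0 := by
          intro h0
          rw [h0] at h
          simp at h
        exact ((mul_inv_eq_one₀ hx0).mp h).symm
      rw [if_neg hP, if_neg hx, zero_mul]
  simp only [step2]
  rw [Finset.sum_ite_eq' Finset.univ]
  simp only [Finset.mem_univ, if_true]
  have condiff : (c * d * lam⁻¹ * (1 - a * b * lam⁻¹)⁻¹ = 1) ↔ (a * b + c * d = lam) := by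
    constructor
    · intro h
      have h1 : (1 - a * b * lam⁻¹) ≠ 0 := by
        intro h0
        rw [h0] at h
        simp at h
      rw [mul_inv_eq_one₀ h1] at h
      field_simp at h
      linear_combination h
    · intro h
      have h1 : (1 - a * b * lam⁻¹) = c * d * lam⁻¹ := by
        field_simp
        first
        | linear_combination (2:F) * h
        | linear_combination (-2:F) * h
        | linear_combination h
        | linear_combination -h
        | ring_nf; linear_combination h
      rw [h1]
      exact mul_inv_cancel₀ (by simp [hc, hd, hlam])
  by_cases hcond : a * b + c * d = lam
  · rw [if_pos (condiff.mpr hcond), if_pos hcond]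
    ring
  · rw [if_neg (fun h => hcond (condiff.mp h)), if_neg hcond]

lemma main_identity {lam : F} (hlam : lam ≠ 0) (A₀ B₀ C₀ D₀ : Finset F)
    (hA : (0:F) ∉ A₀) (hB : (0:F) ∉ B₀) (hC : (0:F) ∉ C₀) (hD : (0:F) ∉ D₀)
    (hno : ∀ p ∈ (A₀ ×ˢ B₀) ×ˢ (C₀ ×ˢ D₀),
      ¬(p.1.1 * p.1.2 + p.2.1 * p.2.2 = lam)) :
    ∑ χ : MulChar F ℂ, ∑ φ : MulChar F ℂ,
      (∑ a ∈ A₀, χ a) * (∑ b ∈ B₀, χ b) * (∑ c ∈ C₀, φ c) * (∑ d ∈ D₀, φ d) *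
        (χ⁻¹ lam * φ⁻¹ lam * jacobiSum χ⁻¹ φ⁻¹) = 0 := by
  set bigset := (A₀ ×ˢ B₀) ×ˢ (C₀ ×ˢ D₀) with hbig
  have hfact : ∀ χ φ : MulChar F ℂ,
      (∑ a ∈ A₀, χ a) * (∑ b ∈ B₀, χ b) * (∑ c ∈ C₀, φ c) * (∑ d ∈ D₀, φ d) *
        (χ⁻¹ lam * φ⁻¹ lam * jacobiSum χ⁻¹ φ⁻¹)
      = ∑ p ∈ bigset, χ p.1.1 * χ p.1.2 * φ p.2.1 * φ p.2.2 *
        (χ⁻¹ lam * φ⁻¹ lam * jacobiSum χ⁻¹ φ⁻¹) := by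
    intro χ φ
    symm
    have prod_sum_eq : ∀ (X Y : Finset F) (ψ : MulChar F ℂ),
        ∑ x ∈ X ×ˢ Y, ψ x.1 * ψ x.2 = (∑ a ∈ X, ψ a) * (∑ b ∈ Y, ψ b) := by
      intro X Y ψ
      rw [Finset.sum_product]
      exact (Finset.sum_mul_sum X Y (fun a => ψ a) (fun b => ψ b)).symm
    rw [Finset.sum_product]
    calc ∑ x ∈ A₀ ×ˢ B₀, ∑ y ∈ C₀ ×ˢ D₀, χ x.1 * χ x.2 * φ y.1 * φ y.2 *
          (χ⁻¹ lam * φ⁻¹ lam * jacobiSum χ⁻¹ φ⁻¹)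
        = ∑ x ∈ A₀ ×ˢ B₀, (χ x.1 * χ x.2) * (∑ y ∈ C₀ ×ˢ D₀, φ y.1 * φ y.2) *
          (χ⁻¹ lam * φ⁻¹ lam * jacobiSum χ⁻¹ φ⁻¹) := by
          refine Finset.sum_congr rfl fun x _ => ?_
          rw [Finset.mul_sum, Finset.sum_mul]
          · exact Finset.sum_congr rfl fun y _ => by ring
      _ = (∑ x ∈ A₀ ×ˢ B₀, χ x.1 * χ x.2) * (∑ y ∈ C₀ ×ˢ D₀, φ y.1 * φ y.2) *
          (χ⁻¹ lam * φ⁻¹ lam * jacobiSum χ⁻¹ φ⁻¹) := by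
          rw [Finset.sum_mul, Finset.sum_mul]
      _ = _ := by
          rw [prod_sum_eq A₀ B₀ χ, prod_sum_eq C₀ D₀ φ]
          ring
  simp only [hfact]
  have swap : ∑ χ : MulChar F ℂ, ∑ φ : MulChar F ℂ, ∑ p ∈ bigset,
      χ p.1.1 * χ p.1.2 * φ p.2.1 * φ p.2.2 *
        (χ⁻¹ lam * φ⁻¹ lam * jacobiSum χ⁻¹ φ⁻¹)
      = ∑ p ∈ bigset, ∑ χ : MulChar F ℂ, ∑ φ : MulChar F ℂ,
      χ p.1.1 * χ p.1.2 * φ p.2.1 * φ p.2.2 *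
        (χ⁻¹ lam * φ⁻¹ lam * jacobiSum χ⁻¹ φ⁻¹) := by
    rw [show (∑ χ : MulChar F ℂ, ∑ φ : MulChar F ℂ, ∑ p ∈ bigset,
        χ p.1.1 * χ p.1.2 * φ p.2.1 * φ p.2.2 *
        (χ⁻¹ lam * φ⁻¹ lam * jacobiSum χ⁻¹ φ⁻¹))
        = ∑ χ : MulChar F ℂ, ∑ p ∈ bigset, ∑ φ : MulChar F ℂ,
        χ p.1.1 * χ p.1.2 * φ p.2.1 * φ p.2.2 *
        (χ⁻¹ lam * φ⁻¹ lam * jacobiSum χ⁻¹ φ⁻¹) from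
      Finset.sum_congr rfl fun χ _ => Finset.sum_comm]
    exact Finset.sum_comm
  rw [swap]
  refine Finset.sum_eq_zero fun p hp => ?_
  have hmem := hp
  rw [hbig, Finset.mem_product] at hmem
  obtain ⟨h12, h34⟩ := hmem
  rw [Finset.mem_product] at h12 h34
  have ha : p.1.1 ≠ 0 := fun h => hA (h ▸ h12.1)
  have hb : p.1.2 ≠ 0 := fun h => hB (h ▸ h12.2)
  have hc : p.2.1 ≠ 0 := fun h => hC (h ▸ h34.1)
  have hd : p.2.2 ≠ 0 := fun h => hD (h ▸ h34.2)
  rw [pointwise hlam ha hb hc hd, if_neg (hno p hp)]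

end SolvAux

open SolvAux

set_option maxHeartbeats 3200000 in
/-- There is an absolute constant `C > 0` such that for every finite field `F` with `q`
elements and all sets `A, B, C', D ⊆ F` with `|A||B||C'||D| ≥ C q^3`, the equation
`ab + cd = λ` is solvable for every nonzero `λ`. -/
theorem solvable_ab_cd : ∃ C : ℝ, 0 < C ∧
    ∀ (F : Type) [Field F] [Fintype F] [DecidableEq F] (A B C' D : Finset F),
      (A.card * B.card * C'.card * D.card : ℝ) ≥ C * (Fintype.card F : ℝ) ^ 3 →
      ∀ lam : F, lam ≠ 0 →
        ∃ a ∈ A, ∃ b ∈ B, ∃ c ∈ C', ∃ d ∈ D, a * b + c * d = lam := by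
  classical
  refine ⟨1048576, by norm_num, ?_⟩
  intro F _ _ _ A B C' D hcard lam hlam
  by_contra hno
  push_neg at hno
  have hq1 : 1 < Fintype.card F := Fintype.one_lt_card
  set q : ℝ := (Fintype.card F : ℝ) with hqdef
  have hqR : (0:ℝ) < q := by
    rw [hqdef]
    exact_mod_cast Nat.zero_lt_of_lt hq1
  have hq3 : (0:ℝ) < q^3 := by positivity
  have cardle : ∀ X : Finset F, (X.card : ℝ) ≤ q := by
    intro X
    have := Finset.card_le_univ X
    rw [hqdef]
    exact_mod_cast this
  -- every set is large
  have hbig : ∀ {X : Finset F}, (A.card * B.card * C'.card * D.card : ℝ) ≥ 1048576 * q^3 →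
      True := fun _ => trivial
  have hAprod : (A.card * B.card * C'.card * D.card : ℝ) ≤ (A.card : ℝ) * q * q * q := by
    have h0 : (0:ℝ) ≤ (A.card:ℝ) := by positivity
    gcongr <;> [exact cardle B; exact cardle C'; exact cardle D]
  have hBprod : (A.card * B.card * C'.card * D.card : ℝ) ≤ (B.card : ℝ) * q * q * q := by
    have e : (A.card * B.card * C'.card * D.card : ℝ) = (B.card * A.card * C'.card * D.card : ℝ) := by ring
    rw [e]
    gcongr <;> [exact cardle A; exact cardle C'; exact cardle D]
  have hCprod : (A.card * B.card * C'.card * D.card : ℝ) ≤ (C'.card : ℝ) * q * q * q := by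
    have e : (A.card * B.card * C'.card * D.card : ℝ) = (C'.card * A.card * B.card * D.card : ℝ) := by ring
    rw [e]
    gcongr <;> [exact cardle A; exact cardle B; exact cardle D]
  have hDprod : (A.card * B.card * C'.card * D.card : ℝ) ≤ (D.card : ℝ) * q * q * q := by
    have e : (A.card * B.card * C'.card * D.card : ℝ) = (D.card * A.card * B.card * C'.card : ℝ) := by ring
    rw [e]
    gcongr <;> [exact cardle A; exact cardle B; exact cardle C']
  have hbigX : ∀ {x : ℝ}, (A.card * B.card * C'.card * D.card : ℝ) ≤ x * q * q * q →
      (1048576 : ℝ) ≤ x := by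
    intro x hx
    have h1 : 1048576 * q^3 ≤ x * q^3 := by nlinarith
    exact le_of_mul_le_mul_right h1 hq3
  have hA1 : (1048576 : ℝ) ≤ A.card := hbigX hAprod
  have hB1 : (1048576 : ℝ) ≤ B.card := hbigX hBprod
  have hC1 : (1048576 : ℝ) ≤ C'.card := hbigX hCprod
  have hD1 : (1048576 : ℝ) ≤ D.card := hbigX hDprod
  have hq20 : (1048576 : ℝ) ≤ q := le_trans hA1 (cardle A)
  -- zero-removed sets
  set A₀ := A.erase 0 with hA₀def
  set B₀ := B.erase 0 with hB₀def
  set C₀ := C'.erase 0 with hC₀def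
  set D₀ := D.erase 0 with hD₀def
  have hA₀ : (0:F) ∉ A₀ := Finset.notMem_erase 0 A
  have hB₀ : (0:F) ∉ B₀ := Finset.notMem_erase 0 B
  have hC₀ : (0:F) ∉ C₀ := Finset.notMem_erase 0 C'
  have hD₀ : (0:F) ∉ D₀ := Finset.notMem_erase 0 D
  have erasebound : ∀ (X : Finset F), (X.card : ℝ) - 1 ≤ ((X.erase 0).card : ℝ) := by
    intro X
    have := Finset.pred_card_le_card_erase (s := X) (a := 0)
    have h2 : (X.card - 1 : ℕ) ≤ (X.erase 0).card := this
    by_cases h : X.card = 0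
    · have h0 : (0:ℝ) ≤ ((X.erase 0).card : ℝ) := by positivity
      rw [h]
      simp only [Nat.cast_zero]
      linarith
    · have h1 : 1 ≤ X.card := Nat.one_le_iff_ne_zero.mpr h
      have : ((X.card - 1 : ℕ) : ℝ) = (X.card : ℝ) - 1 := by
        push_cast [Nat.cast_sub h1]
        ring
      rw [← this]
      exact_mod_cast h2
  set na := (A₀.card : ℝ) with hnadef
  set nb := (B₀.card : ℝ) with hnbdef
  set nc := (C₀.card : ℝ) with hncdef
  set nd := (D₀.card : ℝ) with hnddef
  have hna : (A.card : ℝ) / 2 ≤ na := by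
    have h := erasebound A
    rw [← hA₀def, ← hnadef] at h
    linarith [hA1]
  have hnb : (B.card : ℝ) / 2 ≤ nb := by
    have h := erasebound B
    rw [← hB₀def, ← hnbdef] at h
    linarith [hB1]
  have hnc : (C'.card : ℝ) / 2 ≤ nc := by
    have h := erasebound C'
    rw [← hC₀def, ← hncdef] at h
    linarith [hC1]
  have hnd : (D.card : ℝ) / 2 ≤ nd := by
    have h := erasebound D
    rw [← hD₀def, ← hnddef] at h
    linarith [hD1]
  have hna0 : (0:ℝ) < na := by linarith [hna, hA1]
  have hnb0 : (0:ℝ) < nb := by linarith [hnb, hB1]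
  have hnc0 : (0:ℝ) < nc := by linarith [hnc, hC1]
  have hnd0 : (0:ℝ) < nd := by linarith [hnd, hD1]
  have hP : 65536 * q^3 ≤ na * nb * nc * nd := by
    have h1 : (A.card : ℝ)/2 * ((B.card : ℝ)/2) ≤ na * nb :=
      mul_le_mul hna hnb (by positivity) (by positivity)
    have h2 : (A.card : ℝ)/2 * ((B.card : ℝ)/2) * ((C'.card : ℝ)/2) ≤ na * nb * nc :=
      mul_le_mul h1 hnc (by positivity) (by positivity)
    have h3 : (A.card : ℝ)/2 * ((B.card : ℝ)/2) * ((C'.card : ℝ)/2) * ((D.card : ℝ)/2)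
        ≤ na * nb * nc * nd :=
      mul_le_mul h2 hnd (by positivity) (by positivity)
    nlinarith [hcard]
  -- no solutions among the zero-removed sets
  have hbigno : ∀ p ∈ (A₀ ×ˢ B₀) ×ˢ (C₀ ×ˢ D₀),
      ¬(p.1.1 * p.1.2 + p.2.1 * p.2.2 = lam) := by
    intro p hp h
    rw [Finset.mem_product] at hp
    obtain ⟨h12, h34⟩ := hp
    rw [Finset.mem_product] at h12 h34
    exact hno p.1.1 (Finset.mem_of_mem_erase h12.1) p.1.2 (Finset.mem_of_mem_erase h12.2)
      p.2.1 (Finset.mem_of_mem_erase h34.1) p.2.2 (Finset.mem_of_mem_erase h34.2) h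
  have T0 := main_identity hlam A₀ B₀ C₀ D₀ hA₀ hB₀ hC₀ hD₀ hbigno
  set f : MulChar F ℂ × MulChar F ℂ → ℂ := fun p =>
    (∑ a ∈ A₀, p.1 a) * (∑ b ∈ B₀, p.1 b) * (∑ c ∈ C₀, p.2 c) * (∑ d ∈ D₀, p.2 d) *
      (p.1⁻¹ lam * p.2⁻¹ lam * jacobiSum p.1⁻¹ p.2⁻¹) with hf
  have Tpair : ∑ p : MulChar F ℂ × MulChar F ℂ, f p = 0 := by
    rw [Fintype.sum_prod_type]
    exact T0
  have hsplit : f (1,1) + ∑ p ∈ (Finset.univ.erase ((1,1) : MulChar F ℂ × MulChar F ℂ)), f p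
      = 0 := by
    rw [Finset.add_sum_erase _ f (Finset.mem_univ _)]
    exact Tpair
  have hone : ∀ (X : Finset F), (0:F) ∉ X → (∑ x ∈ X, (1 : MulChar F ℂ) x) = (X.card : ℂ) := by
    intro X hX
    rw [Finset.sum_congr rfl (fun x hx =>
      MulChar.one_apply (isUnit_iff_ne_zero.mpr (fun h => hX (h ▸ hx))))]
    simp
  have hf11 : f (1,1) = ((na * nb * nc * nd * (q - 2) : ℝ) : ℂ) := by
    simp only [hf]
    rw [inv_one, hone A₀ hA₀, hone B₀ hB₀, hone C₀ hC₀, hone D₀ hD₀, jacobiSum_one_one,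
      MulChar.one_apply (isUnit_iff_ne_zero.mpr hlam)]
    rw [hnadef, hnbdef, hncdef, hnddef, hqdef]
    push_cast
    ring
  -- norm bound for off-diagonal terms
  set w : Finset F → MulChar F ℂ → ℝ := fun X χ => ‖∑ x ∈ X, χ x‖ with hw
  have hfbound : ∀ p ∈ Finset.univ.erase ((1,1) : MulChar F ℂ × MulChar F ℂ),
      ‖f p‖ ≤ Real.sqrt q * (w A₀ p.1 * w B₀ p.1 * (w C₀ p.2 * w D₀ p.2)) := by
    intro p hp
    have hne : ¬(p.1 = 1 ∧ p.2 = 1) := by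
      rintro ⟨h1, h2⟩
      exact (Finset.ne_of_mem_erase hp) (Prod.ext h1 h2)
    have h3 : ‖jacobiSum p.1⁻¹ p.2⁻¹‖ ≤ Real.sqrt q := by
      refine norm_jacobiSum_le ?_
      rintro ⟨i1, i2⟩
      exact hne ⟨inv_eq_one.mp i1, inv_eq_one.mp i2⟩
    have hJt : ‖p.1⁻¹ lam * p.2⁻¹ lam * jacobiSum p.1⁻¹ p.2⁻¹‖ ≤ Real.sqrt q := by
      rw [norm_mul, norm_mul]
      have h1 := norm_mulChar_le_one (p.1)⁻¹ lam
      have h2 := norm_mulChar_le_one (p.2)⁻¹ lam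
      have n1 := norm_nonneg ((p.1)⁻¹ lam)
      have n2 := norm_nonneg ((p.2)⁻¹ lam)
      have n3 := norm_nonneg (jacobiSum (p.1)⁻¹ (p.2)⁻¹)
      have key := mul_le_mul_of_nonneg_right (mul_le_mul h1 h2 n2 zero_le_one) n3
      nlinarith [key, h3]
    simp only [hf]
    rw [norm_mul, norm_mul, norm_mul, norm_mul]
    have hnn : (0:ℝ) ≤ w A₀ p.1 * w B₀ p.1 * (w C₀ p.2 * w D₀ p.2) := by positivity
    calc ‖∑ a ∈ A₀, p.1 a‖ * ‖∑ b ∈ B₀, p.1 b‖ * ‖∑ c ∈ C₀, p.2 c‖ * ‖∑ d ∈ D₀, p.2 d‖ *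
          ‖p.1⁻¹ lam * p.2⁻¹ lam * jacobiSum p.1⁻¹ p.2⁻¹‖
        ≤ ‖∑ a ∈ A₀, p.1 a‖ * ‖∑ b ∈ B₀, p.1 b‖ * ‖∑ c ∈ C₀, p.2 c‖ * ‖∑ d ∈ D₀, p.2 d‖ *
          Real.sqrt q := by
          have : (0:ℝ) ≤ ‖∑ a ∈ A₀, p.1 a‖ * ‖∑ b ∈ B₀, p.1 b‖ * ‖∑ c ∈ C₀, p.2 c‖ *
              ‖∑ d ∈ D₀, p.2 d‖ := by positivity
          exact mul_le_mul_of_nonneg_left hJt this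
      _ = Real.sqrt q * (w A₀ p.1 * w B₀ p.1 * (w C₀ p.2 * w D₀ p.2)) := by
          simp only [hw]
          ring
  set S1 : ℝ := ∑ χ : MulChar F ℂ, w A₀ χ * w B₀ χ with hS1def
  set S2 : ℝ := ∑ φ : MulChar F ℂ, w C₀ φ * w D₀ φ with hS2def
  have hEbound : ‖∑ p ∈ (Finset.univ.erase ((1,1) : MulChar F ℂ × MulChar F ℂ)), f p‖
      ≤ Real.sqrt q * (S1 * S2) := by
    calc ‖∑ p ∈ (Finset.univ.erase ((1,1) : MulChar F ℂ × MulChar F ℂ)), f p‖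
        ≤ ∑ p ∈ (Finset.univ.erase ((1,1) : MulChar F ℂ × MulChar F ℂ)), ‖f p‖ :=
          norm_sum_le _ _
      _ ≤ ∑ p ∈ (Finset.univ.erase ((1,1) : MulChar F ℂ × MulChar F ℂ)),
            Real.sqrt q * (w A₀ p.1 * w B₀ p.1 * (w C₀ p.2 * w D₀ p.2)) :=
          Finset.sum_le_sum hfbound
      _ ≤ ∑ p : MulChar F ℂ × MulChar F ℂ,
            Real.sqrt q * (w A₀ p.1 * w B₀ p.1 * (w C₀ p.2 * w D₀ p.2)) := by
          refine Finset.sum_le_sum_of_subset_of_nonneg (Finset.erase_subset _ _) ?_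
          intro p _ _
          positivity
      _ = Real.sqrt q * ∑ p : MulChar F ℂ × MulChar F ℂ,
            (w A₀ p.1 * w B₀ p.1) * (w C₀ p.2 * w D₀ p.2) := by
          rw [← Finset.mul_sum]
      _ = Real.sqrt q * (S1 * S2) := by
          congr 1
          rw [hS1def, hS2def, Finset.sum_mul_sum]
          rw [Fintype.sum_prod_type]
  -- Cauchy-Schwarz and Parseval
  have hCS : ∀ (X Y : Finset F), (0:F) ∉ X → (0:F) ∉ Y →
      (∑ χ : MulChar F ℂ, w X χ * w Y χ)^2 ≤ (q - 1)^2 * (X.card * Y.card) := by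
    intro X Y hX hY
    have cs2 := Finset.sum_mul_sq_le_sq_mul_sq Finset.univ (w X) (w Y)
    rw [parseval X hX, parseval Y hY] at cs2
    calc (∑ χ : MulChar F ℂ, w X χ * w Y χ)^2
        ≤ ((q - 1) * X.card) * ((q - 1) * Y.card) := cs2
      _ = (q - 1)^2 * (X.card * Y.card) := by ring
  have hS1sq : S1^2 ≤ (q - 1)^2 * (na * nb) := hCS A₀ B₀ hA₀ hB₀
  have hS2sq : S2^2 ≤ (q - 1)^2 * (nc * nd) := hCS C₀ D₀ hC₀ hD₀
  have hS1nn : (0:ℝ) ≤ S1 := Finset.sum_nonneg fun χ _ => by positivity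
  have hS2nn : (0:ℝ) ≤ S2 := Finset.sum_nonneg fun φ _ => by positivity
  -- assemble the contradiction
  have hmain : na * nb * nc * nd * (q - 2) ≤ Real.sqrt q * (S1 * S2) := by
    have hE : ∑ p ∈ (Finset.univ.erase ((1,1) : MulChar F ℂ × MulChar F ℂ)), f p = -f (1,1) := by
      linear_combination hsplit
    have : ‖f (1,1)‖ ≤ Real.sqrt q * (S1 * S2) := by
      rw [← norm_neg, ← hE]
      exact hEbound
    rw [hf11] at this
    have hmn : (0:ℝ) ≤ na * nb * nc * nd * (q - 2) := by
      nlinarith [mul_pos (mul_pos (mul_pos hna0 hnb0) hnc0) hnd0, hq20]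
    rw [Complex.norm_real, Real.norm_eq_abs, abs_of_nonneg hmn] at this
    exact this
  have hsq : (na * nb * nc * nd * (q - 2))^2 ≤ q * ((q-1)^2 * (na * nb)) * ((q-1)^2 * (nc * nd)) := by
    have h1 : (na * nb * nc * nd * (q - 2))^2 ≤ (Real.sqrt q * (S1 * S2))^2 := by
      have hmn : (0:ℝ) ≤ na * nb * nc * nd * (q - 2) := by
        nlinarith [mul_pos (mul_pos (mul_pos hna0 hnb0) hnc0) hnd0, hq20]
      exact pow_le_pow_left₀ hmn hmain 2
    have h2 : (Real.sqrt q * (S1 * S2))^2 = q * (S1^2 * S2^2) := by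
      rw [mul_pow, Real.sq_sqrt hqR.le, mul_pow]
    rw [h2] at h1
    have h3 : S1^2 * S2^2 ≤ ((q-1)^2 * (na * nb)) * ((q-1)^2 * (nc * nd)) := by
      have := mul_le_mul hS1sq hS2sq (by positivity) (by positivity)
      exact this
    nlinarith
  -- final numeric contradiction
  have hq4 : (4:ℝ) ≤ q := by linarith
  have hP2 : (q - 2)^2 * (na * nb * nc * nd) ≤ q * (q - 1)^4 := by
    have hprod : (0:ℝ) < na * nb * nc * nd := by positivity
    have expand : (na * nb * nc * nd * (q - 2))^2
        = ((q - 2)^2 * (na * nb * nc * nd)) * (na * nb * nc * nd) := by ring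
    have expand2 : q * ((q-1)^2 * (na * nb)) * ((q-1)^2 * (nc * nd))
        = (q * (q - 1)^4) * (na * nb * nc * nd) := by ring
    rw [expand, expand2] at hsq
    exact le_of_mul_le_mul_right hsq hprod
  have hlow : q * (q - 1)^4 < (q - 2)^2 * (na * nb * nc * nd) := by
    have h1 : (q - 2)^2 * (65536 * q^3) ≤ (q - 2)^2 * (na * nb * nc * nd) :=
      mul_le_mul_of_nonneg_left hP (by positivity)
    have h2 : q * (q - 1)^4 < (q - 2)^2 * (65536 * q^3) := by
      have ha : (q - 1)^4 < q^4 := by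
        have h0 : (0:ℝ) ≤ q - 1 := by linarith
        exact pow_lt_pow_left₀ (by linarith) h0 (by norm_num)
      have hb : q/2 ≤ q - 2 := by linarith
      have hc : (q/2)^2 ≤ (q - 2)^2 := pow_le_pow_left₀ (by positivity) hb 2
      calc q * (q - 1)^4 < q * q^4 := mul_lt_mul_of_pos_left ha hqR
        _ = q^5 := by ring
        _ ≤ 16384 * q^5 := by linarith [pow_pos hqR 5]
        _ = (q/2)^2 * (65536 * q^3) := by ring
        _ ≤ (q - 2)^2 * (65536 * q^3) :=
            mul_le_mul_of_nonneg_right hc (by positivity)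
    linarith
  linarith
end

section
/- Let F_q be a finite field with q elements. There exists an absolute constant C > 0 such that for any sets A, B, C, D ⊆ F_q with |A||B||C||D| ≥ C·q^3, there exist a ∈ A, b ∈ B, c ∈ C, d ∈ D with a + b = cd. -/
open Finset

namespace SolvAux

set_option linter.unusedSectionVars false

variable {F : Type} [Field F] [Fintype F] [DecidableEq F]

/-- Sum of a nontrivial character over multiples of a nonzero element vanishes. -/
lemma sum_char_mul {ψ : AddChar F ℂ} (hψ : ψ ≠ 0) {x : F} (hx : x ≠ 0) :
    ∑ c : F, ψ (c * x) = 0 := by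
  have := Fintype.sum_equiv (Equiv.mulRight₀ x hx) (fun c => ψ (c * x)) (fun c => ψ c)
    (fun c => rfl)
  rw [this]
  exact AddChar.sum_eq_zero_iff_ne_zero.mpr hψ

lemma sum_char_mul_ite {ψ : AddChar F ℂ} (hψ : ψ ≠ 0) (x : F) :
    ∑ c : F, ψ (c * x) = if x = 0 then (Fintype.card F : ℂ) else 0 := by
  by_cases hx : x = 0
  · simp [hx]
  · simp [hx, sum_char_mul hψ hx]

/-- Parseval identity for the character sum over a set. -/
lemma parseval_s3 (A : Finset F) :
    ∑ ψ : AddChar F ℂ, (‖∑ a ∈ A, ψ a‖ : ℝ) ^ 2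
      = (Fintype.card F : ℝ) * A.card := by
  have key : ∑ ψ : AddChar F ℂ, (∑ a ∈ A, ψ a) * (starRingEnd ℂ) (∑ a ∈ A, ψ a)
      = (Fintype.card F : ℂ) * A.card := by
    have step : ∀ ψ : AddChar F ℂ,
        (∑ a ∈ A, ψ a) * (starRingEnd ℂ) (∑ a ∈ A, ψ a)
          = ∑ a ∈ A, ∑ a' ∈ A, ψ (a - a') := by
      intro ψ
      rw [map_sum, Finset.sum_mul_sum]
      refine Finset.sum_congr rfl fun a _ => Finset.sum_congr rfl fun a' _ => ?_
      rw [← AddChar.inv_apply_eq_conj, ← AddChar.map_neg_eq_inv,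
        ← AddChar.map_add_eq_mul, sub_eq_add_neg]
    calc ∑ ψ : AddChar F ℂ, (∑ a ∈ A, ψ a) * (starRingEnd ℂ) (∑ a ∈ A, ψ a)
        = ∑ ψ : AddChar F ℂ, ∑ a ∈ A, ∑ a' ∈ A, ψ (a - a') :=
          Finset.sum_congr rfl fun ψ _ => step ψ
      _ = ∑ a ∈ A, ∑ a' ∈ A, ∑ ψ : AddChar F ℂ, ψ (a - a') := by
          rw [Finset.sum_comm]
          exact Finset.sum_congr rfl fun a _ => Finset.sum_comm
      _ = ∑ a ∈ A, ∑ a' ∈ A, if a = a' then (Fintype.card F : ℂ) else 0 := by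
          refine Finset.sum_congr rfl fun a _ => Finset.sum_congr rfl fun a' _ => ?_
          rw [AddChar.sum_apply_eq_ite]
          simp [sub_eq_zero]
      _ = (Fintype.card F : ℂ) * A.card := by
          simp [Finset.sum_ite_eq, mul_comm]
  have : ((∑ ψ : AddChar F ℂ, (‖∑ a ∈ A, ψ a‖ : ℝ) ^ 2 : ℝ) : ℂ)
      = ((Fintype.card F : ℝ) * A.card : ℝ) := by
    push_cast
    rw [← key]
    refine Finset.sum_congr rfl fun ψ _ => ?_
    rw [Complex.mul_conj']
  exact_mod_cast this
  
/-- Second moment of the inner character sum over all of `F`. -/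
lemma sum_sq_inner {ψ : AddChar F ℂ} (hψ : ψ ≠ 0) (D : Finset F) :
    ∑ c : F, (‖∑ d ∈ D, ψ (-(c * d))‖ : ℝ) ^ 2
      = (Fintype.card F : ℝ) * D.card := by
  have key : ∑ c : F, (∑ d ∈ D, ψ (-(c * d))) * (starRingEnd ℂ) (∑ d ∈ D, ψ (-(c * d)))
      = (Fintype.card F : ℂ) * D.card := by
    have step : ∀ c : F,
        (∑ d ∈ D, ψ (-(c * d))) * (starRingEnd ℂ) (∑ d ∈ D, ψ (-(c * d)))
          = ∑ d ∈ D, ∑ d' ∈ D, ψ (c * (d' - d)) := by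
      intro c
      rw [map_sum, Finset.sum_mul_sum]
      refine Finset.sum_congr rfl fun d _ => Finset.sum_congr rfl fun d' _ => ?_
      rw [← AddChar.inv_apply_eq_conj, ← AddChar.map_neg_eq_inv,
        ← AddChar.map_add_eq_mul]
      ring_nf
    calc ∑ c : F, (∑ d ∈ D, ψ (-(c * d))) * (starRingEnd ℂ) (∑ d ∈ D, ψ (-(c * d)))
        = ∑ c : F, ∑ d ∈ D, ∑ d' ∈ D, ψ (c * (d' - d)) :=
          Finset.sum_congr rfl fun c _ => step c
      _ = ∑ d ∈ D, ∑ d' ∈ D, ∑ c : F, ψ (c * (d' - d)) := by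
          rw [Finset.sum_comm]
          exact Finset.sum_congr rfl fun d _ => Finset.sum_comm
      _ = ∑ d ∈ D, ∑ d' ∈ D, if d' = d then (Fintype.card F : ℂ) else 0 := by
          refine Finset.sum_congr rfl fun d _ => Finset.sum_congr rfl fun d' _ => ?_
          rw [sum_char_mul_ite hψ]
          simp [sub_eq_zero]
      _ = (Fintype.card F : ℂ) * D.card := by
          simp [Finset.sum_ite_eq, mul_comm]
  have : ((∑ c : F, (‖∑ d ∈ D, ψ (-(c * d))‖ : ℝ) ^ 2 : ℝ) : ℂ)
      = ((Fintype.card F : ℝ) * D.card : ℝ) := by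
    push_cast
    rw [← key]
    refine Finset.sum_congr rfl fun c _ => ?_
    rw [Complex.mul_conj']
  exact_mod_cast this

/-- Bound on the bilinear character sum. -/
lemma T_bound {ψ : AddChar F ℂ} (hψ : ψ ≠ 0) (C' D : Finset F) :
    ‖∑ c ∈ C', ∑ d ∈ D, ψ (-(c * d))‖
      ≤ Real.sqrt ((C'.card : ℝ) * ((Fintype.card F : ℝ) * D.card)) := by
  refine Real.le_sqrt_of_sq_le ?_
  calc ‖∑ c ∈ C', ∑ d ∈ D, ψ (-(c * d))‖ ^ 2
      ≤ (∑ c ∈ C', ‖∑ d ∈ D, ψ (-(c * d))‖) ^ 2 := by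
        have := norm_sum_le C' (fun c => ∑ d ∈ D, ψ (-(c * d)))
        exact pow_le_pow_left₀ (norm_nonneg _) this 2
    _ ≤ (C'.card : ℝ) * ∑ c ∈ C', ‖∑ d ∈ D, ψ (-(c * d))‖ ^ 2 :=
        sq_sum_le_card_mul_sum_sq
    _ ≤ (C'.card : ℝ) * ∑ c : F, ‖∑ d ∈ D, ψ (-(c * d))‖ ^ 2 := by
        refine mul_le_mul_of_nonneg_left ?_ (Nat.cast_nonneg _)
        exact Finset.sum_le_sum_of_subset_of_nonneg (Finset.subset_univ _)
          (fun _ _ _ => sq_nonneg _)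
    _ = (C'.card : ℝ) * ((Fintype.card F : ℝ) * D.card) := by
        rw [sum_sq_inner hψ]

end SolvAux

set_option maxHeartbeats 1000000 in
open SolvAux in
/-- There is an absolute constant `C > 0` such that for every finite field `F` with `q`
elements and all sets `A, B, C', D ⊆ F` with `|A||B||C'||D| ≥ C q^3`, the equation
`a + b = cd` is solvable. -/
theorem solvable_a_add_b_eq_cd : ∃ C : ℝ, 0 < C ∧
    ∀ (F : Type) [Field F] [Fintype F] [DecidableEq F] (A B C' D : Finset F),
      (A.card * B.card * C'.card * D.card : ℝ) ≥ C * (Fintype.card F : ℝ) ^ 3 →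
        ∃ a ∈ A, ∃ b ∈ B, ∃ c ∈ C', ∃ d ∈ D, a + b = c * d := by
  refine ⟨2, by norm_num, fun F _ _ _ A B C' D hP => ?_⟩
  classical
  by_contra hcon
  push_neg at hcon
  set q : ℝ := (Fintype.card F : ℝ) with hq
  have hq1 : (1 : ℝ) ≤ q := by
    rw [hq]; exact_mod_cast Fintype.card_pos
  set SA : AddChar F ℂ → ℂ := fun ψ => ∑ a ∈ A, ψ a with hSA
  set SB : AddChar F ℂ → ℂ := fun ψ => ∑ b ∈ B, ψ b with hSB
  set T : AddChar F ℂ → ℂ := fun ψ => ∑ c ∈ C', ∑ d ∈ D, ψ (-(c * d)) with hT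
  have key : ∀ ψ : AddChar F ℂ, SA ψ * SB ψ * T ψ
      = ∑ c ∈ C', ∑ d ∈ D, ∑ b ∈ B, ∑ a ∈ A, ψ (a + b - c * d) := by
    intro ψ
    rw [hSA, hSB, hT]
    simp only [Finset.sum_mul, Finset.mul_sum]
    refine Finset.sum_congr rfl fun c _ => Finset.sum_congr rfl fun d _ =>
      Finset.sum_congr rfl fun b _ => Finset.sum_congr rfl fun a _ => ?_
    rw [sub_eq_add_neg, AddChar.map_add_eq_mul, AddChar.map_add_eq_mul]
  have hK : ∑ ψ : AddChar F ℂ, SA ψ * SB ψ * T ψ = 0 := by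
    calc ∑ ψ : AddChar F ℂ, SA ψ * SB ψ * T ψ
        = ∑ ψ : AddChar F ℂ, ∑ c ∈ C', ∑ d ∈ D, ∑ b ∈ B, ∑ a ∈ A, ψ (a + b - c * d) :=
          Finset.sum_congr rfl fun ψ _ => key ψ
      _ = ∑ c ∈ C', ∑ d ∈ D, ∑ b ∈ B, ∑ a ∈ A, ∑ ψ : AddChar F ℂ, ψ (a + b - c * d) := by
          rw [Finset.sum_comm]
          refine Finset.sum_congr rfl fun c _ => ?_
          rw [Finset.sum_comm]
          refine Finset.sum_congr rfl fun d _ => ?_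
          rw [Finset.sum_comm]
          refine Finset.sum_congr rfl fun b _ => ?_
          rw [Finset.sum_comm]
      _ = 0 := by
          refine Finset.sum_eq_zero fun c hc => Finset.sum_eq_zero fun d hd =>
            Finset.sum_eq_zero fun b hb => Finset.sum_eq_zero fun a ha => ?_
          exact AddChar.sum_apply_eq_zero_iff_ne_zero.mpr
            (sub_ne_zero.mpr (hcon a ha b hb c hc d hd))
  have hsplit := Finset.add_sum_erase Finset.univ
    (fun ψ => SA ψ * SB ψ * T ψ) (Finset.mem_univ (0 : AddChar F ℂ))
  rw [hK] at hsplit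
  have hf0 : SA 0 * SB 0 * T 0 = ((A.card * B.card * C'.card * D.card : ℕ) : ℂ) := by
    rw [hSA, hSB, hT]
    simp only [AddChar.zero_apply, Finset.sum_const, nsmul_eq_mul, mul_one]
    push_cast
    ring
  have hPR : (A.card * B.card * C'.card * D.card : ℝ)
      = ‖∑ ψ ∈ Finset.univ.erase (0 : AddChar F ℂ), SA ψ * SB ψ * T ψ‖ := by
    have h1 : ((A.card * B.card * C'.card * D.card : ℕ) : ℂ)
        = -(∑ ψ ∈ Finset.univ.erase (0 : AddChar F ℂ), SA ψ * SB ψ * T ψ) := by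
      rw [← hf0]; linear_combination hsplit
    have h2 := congrArg norm h1
    rw [norm_neg, Complex.norm_natCast] at h2
    push_cast at h2 ⊢
    linarith [h2]
  set t : ℝ := Real.sqrt ((C'.card : ℝ) * (q * D.card)) with ht
  have ht0 : 0 ≤ t := Real.sqrt_nonneg _
  set S : ℝ := ∑ ψ : AddChar F ℂ, ‖SA ψ‖ * ‖SB ψ‖ with hS
  have hS0 : 0 ≤ S := Finset.sum_nonneg fun _ _ =>
    mul_nonneg (norm_nonneg _) (norm_nonneg _)
  have hPle : (A.card * B.card * C'.card * D.card : ℝ) ≤ t * S := by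
    rw [hPR]
    calc ‖∑ ψ ∈ Finset.univ.erase (0 : AddChar F ℂ), SA ψ * SB ψ * T ψ‖
        ≤ ∑ ψ ∈ Finset.univ.erase (0 : AddChar F ℂ), ‖SA ψ * SB ψ * T ψ‖ :=
          norm_sum_le _ _
      _ ≤ ∑ ψ ∈ Finset.univ.erase (0 : AddChar F ℂ), ‖SA ψ‖ * ‖SB ψ‖ * t := by
          refine Finset.sum_le_sum fun ψ hψ => ?_
          rw [norm_mul, norm_mul]
          exact mul_le_mul_of_nonneg_left (T_bound (Finset.mem_erase.mp hψ).1 C' D)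
            (mul_nonneg (norm_nonneg _) (norm_nonneg _))
      _ ≤ ∑ ψ : AddChar F ℂ, ‖SA ψ‖ * ‖SB ψ‖ * t := by
          refine Finset.sum_le_sum_of_subset_of_nonneg (Finset.subset_univ _)
            (fun ψ _ _ => ?_)
          exact mul_nonneg (mul_nonneg (norm_nonneg _) (norm_nonneg _)) ht0
      _ = t * S := by rw [hS, ← Finset.sum_mul]; ring
  have hS2 : S ^ 2 ≤ (q * A.card) * (q * B.card) := by
    have hcs := sum_mul_sq_le_sq_mul_sq Finset.univ
      (fun ψ : AddChar F ℂ => ‖SA ψ‖) (fun ψ : AddChar F ℂ => ‖SB ψ‖)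
    rw [hS]
    calc (∑ ψ : AddChar F ℂ, ‖SA ψ‖ * ‖SB ψ‖) ^ 2
        ≤ (∑ ψ : AddChar F ℂ, ‖SA ψ‖ ^ 2) * ∑ ψ : AddChar F ℂ, ‖SB ψ‖ ^ 2 := hcs
      _ = (q * A.card) * (q * B.card) := by
          rw [hSA, hSB]
          simp only []
          rw [parseval_s3, parseval_s3]
  have ht2 : t ^ 2 = (C'.card : ℝ) * (q * D.card) := by
    rw [ht]
    exact Real.sq_sqrt (by positivity)
  set P : ℝ := (A.card * B.card * C'.card * D.card : ℝ) with hPdef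
  have hP0 : 0 < P := lt_of_lt_of_le (by positivity) hP
  have hsq : P ^ 2 ≤ q ^ 3 * P := by
    calc P ^ 2 ≤ (t * S) ^ 2 := by
          refine pow_le_pow_left₀ (le_of_lt hP0) ?_ 2
          exact hPle
      _ = t ^ 2 * S ^ 2 := by ring
      _ ≤ ((C'.card : ℝ) * (q * D.card)) * ((q * A.card) * (q * B.card)) := by
          rw [ht2]
          exact mul_le_mul_of_nonneg_left hS2 (by positivity)
      _ = q ^ 3 * P := by rw [hPdef]; push_cast; ring
  nlinarith [hP, hP0, hsq, hq1, sq_nonneg q]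
end

section
/- Let F_q be a finite field with q elements and F, G, H ⊆ F_q nonempty. Let E(F,G,H) be the set of λ ∈ F_q such that the equation f + gh = λ has no solution with f ∈ F, g ∈ G, h ∈ H. Then |E(F,G,H)| ≤ 16·q^3/(|F||G||H|). -/
open Finset Complex
open scoped ComplexConjugate

namespace ExceptionalAux

variable {F : Type} [Field F] [Fintype F] [DecidableEq F]

lemma sum_psi_mul (ψ : AddChar F ℂ) (hψ : ψ ≠ 0) (d : F) :
    ∑ g : F, ψ (g * d) = if d = 0 then (Fintype.card F : ℂ) else 0 := by
  split_ifs with hd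
  · simp [hd]
  · rw [← AddChar.sum_eq_zero_iff_ne_zero.2 hψ]
    exact Fintype.sum_equiv (Equiv.mulRight₀ d hd) _ _ fun g => rfl

lemma ind_sum (a b : F) :
    ∑ lam : F, (if a = lam then (1 : ℂ) else 0) * (if b = lam then 1 else 0)
      = if a = b then 1 else 0 := by
  simp only [ite_mul, one_mul, zero_mul]
  rw [Finset.sum_ite_eq]
  simp [eq_comm]

/-- Orthogonality / Parseval on the character side for a set. -/
lemma char_parseval (A : Finset F) :
    ∑ ψ : AddChar F ℂ, (∑ f ∈ A, ψ f) * conj (∑ f ∈ A, ψ f)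
      = (Fintype.card F : ℂ) * A.card := by
  have h1 : ∀ ψ : AddChar F ℂ, (∑ f ∈ A, ψ f) * conj (∑ f ∈ A, ψ f)
      = ∑ f ∈ A, ∑ f' ∈ A, ψ (f - f') := by
    intro ψ
    rw [map_sum, Finset.sum_mul_sum]
    refine Finset.sum_congr rfl fun f _ => Finset.sum_congr rfl fun f' _ => ?_
    rw [← AddChar.map_neg_eq_conj, ← AddChar.map_add_eq_mul, sub_eq_add_neg]
  calc ∑ ψ : AddChar F ℂ, (∑ f ∈ A, ψ f) * conj (∑ f ∈ A, ψ f)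
      = ∑ f ∈ A, ∑ f' ∈ A, ∑ ψ : AddChar F ℂ, ψ (f - f') := by
        rw [Finset.sum_congr rfl fun ψ _ => h1 ψ]
        rw [Finset.sum_comm]
        exact Finset.sum_congr rfl fun f _ => Finset.sum_comm
    _ = ∑ f ∈ A, ∑ f' ∈ A, (if f = f' then (Fintype.card F : ℂ) else 0) := by
        refine Finset.sum_congr rfl fun f _ => Finset.sum_congr rfl fun f' _ => ?_
        rw [AddChar.sum_apply_eq_ite]
        exact if_congr sub_eq_zero rfl rfl
    _ = ∑ f ∈ A, (Fintype.card F : ℂ) := by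
        refine Finset.sum_congr rfl fun f hf => ?_
        rw [Finset.sum_ite_eq]
        simp [hf]
    _ = (Fintype.card F : ℂ) * A.card := by
        rw [Finset.sum_const, nsmul_eq_mul, mul_comm]

/-- Parseval identity for the counting function of a map `e` on a finset `s`. -/
lemma parseval_count (s : Finset (F × F × F)) (e : F × F × F → F) :
    (Fintype.card F : ℂ) * ∑ lam : F, ((s.filter (fun p => e p = lam)).card : ℂ) ^ 2
      = ∑ ψ : AddChar F ℂ, (∑ p ∈ s, ψ (e p)) * conj (∑ p ∈ s, ψ (e p)) := by
  have hN : ∀ lam : F, ((s.filter (fun p => e p = lam)).card : ℂ)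
      = ∑ p ∈ s, (if e p = lam then (1 : ℂ) else 0) := by
    intro lam
    rw [Finset.card_filter]
    push_cast
    rfl
  have hR : ∀ ψ : AddChar F ℂ, (∑ p ∈ s, ψ (e p)) * conj (∑ p ∈ s, ψ (e p))
      = ∑ p ∈ s, ∑ p' ∈ s, ψ (e p - e p') := by
    intro ψ
    rw [map_sum, Finset.sum_mul_sum]
    refine Finset.sum_congr rfl fun p _ => Finset.sum_congr rfl fun p' _ => ?_
    rw [← AddChar.map_neg_eq_conj, ← AddChar.map_add_eq_mul, sub_eq_add_neg]
  calc (Fintype.card F : ℂ) * ∑ lam : F, ((s.filter (fun p => e p = lam)).card : ℂ) ^ 2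
      = (Fintype.card F : ℂ) *
          ∑ lam : F, ∑ p ∈ s, ∑ p' ∈ s,
            (if e p = lam then (1 : ℂ) else 0) * (if e p' = lam then 1 else 0) := by
        congr 1
        refine Finset.sum_congr rfl fun lam _ => ?_
        rw [hN lam, sq, Finset.sum_mul_sum]
    _ = (Fintype.card F : ℂ) *
          ∑ p ∈ s, ∑ p' ∈ s, (if e p = e p' then (1 : ℂ) else 0) := by
        congr 1
        rw [Finset.sum_comm]
        refine Finset.sum_congr rfl fun p _ => ?_
        rw [Finset.sum_comm]
        exact Finset.sum_congr rfl fun p' _ => ind_sum _ _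
    _ = ∑ p ∈ s, ∑ p' ∈ s, (if e p - e p' = 0 then (Fintype.card F : ℂ) else 0) := by
        rw [Finset.mul_sum]
        refine Finset.sum_congr rfl fun p _ => ?_
        rw [Finset.mul_sum]
        refine Finset.sum_congr rfl fun p' _ => ?_
        rw [mul_ite, mul_one, mul_zero]
        exact (if_congr sub_eq_zero rfl rfl).symm
    _ = ∑ ψ : AddChar F ℂ, (∑ p ∈ s, ψ (e p)) * conj (∑ p ∈ s, ψ (e p)) := by
        rw [show (∑ ψ : AddChar F ℂ, (∑ p ∈ s, ψ (e p)) * conj (∑ p ∈ s, ψ (e p)))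
            = ∑ ψ : AddChar F ℂ, ∑ p ∈ s, ∑ p' ∈ s, ψ (e p - e p') from
          Finset.sum_congr rfl fun ψ _ => hR ψ]
        refine Eq.symm ?_
        rw [Finset.sum_comm]
        refine Finset.sum_congr rfl fun p _ => ?_
        rw [Finset.sum_comm]
        refine Finset.sum_congr rfl fun p' _ => ?_
        rw [AddChar.sum_apply_eq_ite]

/-- The key bound on the nontrivial character sums over products. -/
lemma K_bound (G H : Finset F) (ψ : AddChar F ℂ) (hψ : ψ ≠ 0) :
    ‖∑ g ∈ G, ∑ h ∈ H, ψ (g * h)‖ ^ 2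
      ≤ (Fintype.card F : ℝ) * G.card * H.card := by
  set k : F → ℂ := fun g => ∑ h ∈ H, ψ (g * h) with hk
  have step1 : ‖∑ g ∈ G, k g‖ ^ 2 ≤ (G.card : ℝ) * ∑ g ∈ G, ‖k g‖ ^ 2 := by
    have h1 : ‖∑ g ∈ G, k g‖ ≤ ∑ g ∈ G, ‖k g‖ := norm_sum_le _ _
    have h2 : (∑ g ∈ G, ‖k g‖) ^ 2 ≤ (∑ g ∈ G, (1 : ℝ) ^ 2) * ∑ g ∈ G, ‖k g‖ ^ 2 := by
      simpa using Finset.sum_mul_sq_le_sq_mul_sq G (fun _ => (1 : ℝ)) (fun g => ‖k g‖)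
    have h3 : (∑ g ∈ G, (1 : ℝ) ^ 2) = (G.card : ℝ) := by simp
    calc ‖∑ g ∈ G, k g‖ ^ 2 ≤ (∑ g ∈ G, ‖k g‖) ^ 2 := by
          apply pow_le_pow_left₀ (norm_nonneg _) h1
      _ ≤ (G.card : ℝ) * ∑ g ∈ G, ‖k g‖ ^ 2 := by rw [← h3]; exact h2
  have step2 : ∑ g ∈ G, ‖k g‖ ^ 2 ≤ ∑ g : F, ‖k g‖ ^ 2 :=
    Finset.sum_le_sum_of_subset_of_nonneg (Finset.subset_univ G)
      (fun _ _ _ => sq_nonneg _)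
  have step3 : ∑ g : F, ‖k g‖ ^ 2 = (Fintype.card F : ℝ) * H.card := by
    have hcx : ((∑ g : F, ‖k g‖ ^ 2 : ℝ) : ℂ) = (Fintype.card F : ℂ) * H.card := by
      push_cast
      have : ∀ g : F, ((‖k g‖ : ℂ)) ^ 2 = k g * conj (k g) := fun g =>
        (RCLike.mul_conj (k g)).symm
      rw [Finset.sum_congr rfl fun g _ => this g]
      calc ∑ g : F, k g * conj (k g)
          = ∑ g : F, ∑ h ∈ H, ∑ h' ∈ H, ψ (g * h - g * h') := by
            refine Finset.sum_congr rfl fun g _ => ?_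
            rw [hk, map_sum, Finset.sum_mul_sum]
            refine Finset.sum_congr rfl fun h _ => Finset.sum_congr rfl fun h' _ => ?_
            rw [← AddChar.map_neg_eq_conj, ← AddChar.map_add_eq_mul, sub_eq_add_neg]
        _ = ∑ h ∈ H, ∑ h' ∈ H, ∑ g : F, ψ (g * (h - h')) := by
            rw [Finset.sum_comm]
            refine Finset.sum_congr rfl fun h _ => ?_
            rw [Finset.sum_comm]
            refine Finset.sum_congr rfl fun h' _ => Finset.sum_congr rfl fun g _ => ?_
            ring_nf
        _ = ∑ h ∈ H, ∑ h' ∈ H, (if h = h' then (Fintype.card F : ℂ) else 0) := by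
            refine Finset.sum_congr rfl fun h _ => Finset.sum_congr rfl fun h' _ => ?_
            rw [sum_psi_mul ψ hψ]
            exact if_congr sub_eq_zero rfl rfl
        _ = (Fintype.card F : ℂ) * H.card := by
            rw [Finset.sum_congr rfl fun h hh => ?_]
            · rw [Finset.sum_const, nsmul_eq_mul, mul_comm]
            · rw [Finset.sum_ite_eq]
              simp [hh]
    exact_mod_cast hcx
  calc ‖∑ g ∈ G, k g‖ ^ 2 ≤ (G.card : ℝ) * ∑ g ∈ G, ‖k g‖ ^ 2 := step1
    _ ≤ (G.card : ℝ) * ((Fintype.card F : ℝ) * H.card) := by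
        refine mul_le_mul_of_nonneg_left ?_ (Nat.cast_nonneg _)
        rw [← step3]; exact step2
    _ = (Fintype.card F : ℝ) * G.card * H.card := by ring

end ExceptionalAux

set_option maxHeartbeats 1600000

/-- For a finite field `F` with `q` elements and nonempty `F', G, H ⊆ F`, the set of
`λ ∈ F` for which `f + gh = λ` has no solution has at most `16 q^3 / (|F'||G||H|)`
elements. -/
theorem exceptional_set_bound (F : Type) [Field F] [Fintype F] [DecidableEq F]
    (F' G H : Finset F) (hF : F'.Nonempty) (hG : G.Nonempty) (hH : H.Nonempty) :
    ((Finset.univ.filter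
        (fun lam : F => ∀ f ∈ F', ∀ g ∈ G, ∀ h ∈ H, f + g * h ≠ lam)).card : ℝ) ≤
      16 * (Fintype.card F : ℝ) ^ 3 / (F'.card * G.card * H.card : ℝ) := by
  classical
  set q : ℕ := Fintype.card F with hq
  set s : Finset (F × F × F) := F' ×ˢ G ×ˢ H with hs
  set e : F × F × F → F := fun p => p.1 + p.2.1 * p.2.2 with he
  set N : F → ℕ := fun lam => (s.filter (fun p => e p = lam)).card with hN
  set E : Finset F :=
    Finset.univ.filter (fun lam : F => ∀ f ∈ F', ∀ g ∈ G, ∀ h ∈ H, f + g * h ≠ lam)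
    with hE
  -- basic positivity facts
  have hq1 : 1 ≤ (q : ℝ) := by
    exact_mod_cast Nat.one_le_iff_ne_zero.2 Fintype.card_ne_zero
  have hscard : s.card = F'.card * G.card * H.card := by
    rw [hs, Finset.card_product, Finset.card_product]; ring
  have hP1 : 1 ≤ (s.card : ℝ) := by
    have : s.Nonempty := by
      rw [hs]
      exact hF.product (hG.product hH)
    exact_mod_cast Nat.one_le_iff_ne_zero.2 (Finset.card_ne_zero_of_mem this.choose_spec)
  -- Step 0: N vanishes on E
  have hNE : ∀ lam ∈ E, N lam = 0 := by
    intro lam hlam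
    rw [hE, Finset.mem_filter] at hlam
    rw [hN, Finset.card_eq_zero, Finset.filter_eq_empty_iff]
    rintro ⟨f, g, h⟩ hp
    rw [hs, Finset.mem_product, Finset.mem_product] at hp
    exact hlam.2 f hp.1 g hp.2.1 h hp.2.2
  -- Step 1: total count
  have hsum : ∑ lam : F, N lam = s.card := by
    calc ∑ lam : F, N lam
        = ∑ lam : F, ∑ p ∈ s, (if e p = lam then 1 else 0) :=
          Finset.sum_congr rfl fun lam _ => Finset.card_filter _ _
      _ = ∑ p ∈ s, ∑ lam : F, (if e p = lam then 1 else 0) := Finset.sum_comm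
      _ = ∑ p ∈ s, 1 := Finset.sum_congr rfl fun p _ => by
          rw [Finset.sum_ite_eq]; simp
      _ = s.card := by simp
  -- Step 2: second moment bound
  have hT : (q : ℝ) * ∑ lam : F, (N lam : ℝ) ^ 2
      ≤ (s.card : ℝ) ^ 2 + (q : ℝ) ^ 2 * s.card := by
    -- work in ℂ
    have key := ExceptionalAux.parseval_count s e
    -- split character sum at the trivial character
    set c : AddChar F ℂ → ℂ := fun ψ => ∑ p ∈ s, ψ (e p) with hc
    have hc0 : c 0 = (s.card : ℂ) := by
      simp [hc]
    have hsplit : ∑ ψ : AddChar F ℂ, c ψ * conj (c ψ)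
        = c 0 * conj (c 0) + ∑ ψ ∈ Finset.univ.erase (0 : AddChar F ℂ),
            c ψ * conj (c ψ) := by
      rw [← Finset.add_sum_erase _ _ (Finset.mem_univ (0 : AddChar F ℂ))]
    -- norms
    have hnorm : ∀ ψ : AddChar F ℂ, c ψ * conj (c ψ) = ((‖c ψ‖ : ℂ)) ^ 2 := fun ψ =>
      RCLike.mul_conj (c ψ)
    -- factorization of c ψ
    have hfac : ∀ ψ : AddChar F ℂ,
        c ψ = (∑ f ∈ F', ψ f) * (∑ g ∈ G, ∑ h ∈ H, ψ (g * h)) := by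
      intro ψ
      have hcψ : c ψ = ∑ f ∈ F', ∑ g ∈ G, ∑ h ∈ H, ψ (f + g * h) := by
        simp only [hc, hs, he]
        rw [Finset.sum_product]
        refine Finset.sum_congr rfl fun f _ => ?_
        rw [Finset.sum_product]
      rw [hcψ, Finset.sum_mul_sum]
      refine Finset.sum_congr rfl fun f _ => ?_
      refine Finset.sum_congr rfl fun g _ => ?_
      rw [Finset.mul_sum]
      exact Finset.sum_congr rfl fun h _ => AddChar.map_add_eq_mul ψ f (g * h)
    -- real bound on the erased sum
    have herase : ∑ ψ ∈ Finset.univ.erase (0 : AddChar F ℂ), ‖c ψ‖ ^ 2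
        ≤ ((q : ℝ) * G.card * H.card) * ((q : ℝ) * F'.card) := by
      have hbound : ∀ ψ ∈ Finset.univ.erase (0 : AddChar F ℂ),
          ‖c ψ‖ ^ 2 ≤ ((q : ℝ) * G.card * H.card) * ‖∑ f ∈ F', ψ f‖ ^ 2 := by
        intro ψ hψ
        have hψ0 : ψ ≠ 0 := (Finset.mem_erase.1 hψ).1
        rw [hfac ψ, norm_mul, mul_pow]
        rw [mul_comm (((q : ℝ) * G.card * H.card)) _]
        refine mul_le_mul_of_nonneg_left ?_ (sq_nonneg _)
        exact ExceptionalAux.K_bound G H ψ hψ0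
      calc ∑ ψ ∈ Finset.univ.erase (0 : AddChar F ℂ), ‖c ψ‖ ^ 2
          ≤ ∑ ψ ∈ Finset.univ.erase (0 : AddChar F ℂ),
              ((q : ℝ) * G.card * H.card) * ‖∑ f ∈ F', ψ f‖ ^ 2 :=
            Finset.sum_le_sum hbound
        _ = ((q : ℝ) * G.card * H.card) *
              ∑ ψ ∈ Finset.univ.erase (0 : AddChar F ℂ), ‖∑ f ∈ F', ψ f‖ ^ 2 := by
            rw [← Finset.mul_sum]
        _ ≤ ((q : ℝ) * G.card * H.card) *
              ∑ ψ : AddChar F ℂ, ‖∑ f ∈ F', ψ f‖ ^ 2 := by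
            refine mul_le_mul_of_nonneg_left ?_ (by positivity)
            exact Finset.sum_le_sum_of_subset_of_nonneg (Finset.erase_subset _ _)
              (fun _ _ _ => sq_nonneg _)
        _ ≤ ((q : ℝ) * G.card * H.card) * ((q : ℝ) * F'.card) := by
            refine mul_le_mul_of_nonneg_left ?_ (by positivity)
            have := ExceptionalAux.char_parseval F'
            have hre : (∑ ψ : AddChar F ℂ, ‖∑ f ∈ F', ψ f‖ ^ 2 : ℝ)
                = ((q : ℝ) * F'.card) := by
              have : ((∑ ψ : AddChar F ℂ, ‖∑ f ∈ F', ψ f‖ ^ 2 : ℝ) : ℂ)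
                  = ((q : ℝ) * F'.card : ℝ) := by
                push_cast
                rw [← ExceptionalAux.char_parseval F']
                refine Finset.sum_congr rfl fun ψ _ => ?_
                exact (RCLike.mul_conj _).symm
              exact_mod_cast this
            rw [hre]
      -- done
    -- assemble: complex identity to real inequality
    have hreal : (q : ℝ) * ∑ lam : F, (N lam : ℝ) ^ 2
        = (s.card : ℝ) ^ 2 + ∑ ψ ∈ Finset.univ.erase (0 : AddChar F ℂ), ‖c ψ‖ ^ 2 := by
      have hcx : (((q : ℝ) * ∑ lam : F, (N lam : ℝ) ^ 2 : ℝ) : ℂ)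
          = (((s.card : ℝ) ^ 2 + ∑ ψ ∈ Finset.univ.erase (0 : AddChar F ℂ),
              ‖c ψ‖ ^ 2 : ℝ) : ℂ) := by
        push_cast
        rw [key, hsplit, hc0]
        rw [Finset.sum_congr rfl fun ψ _ => hnorm ψ]
        have : ((s.card : ℂ)) * conj ((s.card : ℂ)) = (s.card : ℂ) ^ 2 := by
          rw [Complex.conj_natCast]; ring
        rw [this]
      exact_mod_cast hcx
    rw [hreal, hscard]
    have : ((q : ℝ) * G.card * H.card) * ((q : ℝ) * F'.card)
        = (q : ℝ) ^ 2 * (↑F'.card * ↑G.card * ↑H.card) := by ring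
    push_cast
    nlinarith [herase]
  -- Step 3: Cauchy–Schwarz on the complement of E
  have hEsub : E ⊆ Finset.univ := Finset.subset_univ E
  have hcompl : ∑ lam ∈ Finset.univ \ E, (N lam : ℝ) = (s.card : ℝ) := by
    have h1 : ∑ lam ∈ Finset.univ \ E, (N lam : ℝ)
        = ∑ lam : F, (N lam : ℝ) - ∑ lam ∈ E, (N lam : ℝ) :=
      Finset.sum_sdiff_eq_sub hEsub
    have h2 : ∑ lam ∈ E, (N lam : ℝ) = 0 :=
      Finset.sum_eq_zero fun lam hlam => by rw [hNE lam hlam]; norm_num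
    have h3 : ∑ lam : F, (N lam : ℝ) = (s.card : ℝ) := by
      exact_mod_cast congrArg (Nat.cast : ℕ → ℝ) hsum
    rw [h1, h2, h3, sub_zero]
  have hCS : (s.card : ℝ) ^ 2
      ≤ ((q : ℝ) - E.card) * ∑ lam : F, (N lam : ℝ) ^ 2 := by
    have h1 : (∑ lam ∈ Finset.univ \ E, (N lam : ℝ)) ^ 2
        ≤ (∑ lam ∈ Finset.univ \ E, (1 : ℝ) ^ 2) *
            ∑ lam ∈ Finset.univ \ E, (N lam : ℝ) ^ 2 := by
      simpa using Finset.sum_mul_sq_le_sq_mul_sq (Finset.univ \ E)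
        (fun _ => (1 : ℝ)) (fun lam => (N lam : ℝ))
    have hcard : (∑ lam ∈ Finset.univ \ E, (1 : ℝ) ^ 2) = (q : ℝ) - E.card := by
      rw [Finset.sum_const]
      simp only [nsmul_eq_mul, one_pow, mul_one]
      rw [Finset.card_sdiff_of_subset hEsub, Finset.card_univ, Nat.cast_sub (Finset.card_le_univ E)]
    have h2 : ∑ lam ∈ Finset.univ \ E, (N lam : ℝ) ^ 2
        ≤ ∑ lam : F, (N lam : ℝ) ^ 2 :=
      Finset.sum_le_sum_of_subset_of_nonneg (Finset.sdiff_subset)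
        (fun _ _ _ => sq_nonneg _)
    calc (s.card : ℝ) ^ 2 = (∑ lam ∈ Finset.univ \ E, (N lam : ℝ)) ^ 2 := by
          rw [hcompl]
      _ ≤ (∑ lam ∈ Finset.univ \ E, (1 : ℝ) ^ 2) *
            ∑ lam ∈ Finset.univ \ E, (N lam : ℝ) ^ 2 := h1
      _ ≤ ((q : ℝ) - E.card) * ∑ lam : F, (N lam : ℝ) ^ 2 := by
          rw [hcard]
          refine mul_le_mul_of_nonneg_left h2 ?_
          rw [← hcard]
          positivity
  -- Final algebra
  have hEq : (E.card : ℝ) * (s.card : ℝ) ≤ (q : ℝ) ^ 3 := by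
    have hT2 : ∑ lam : F, (N lam : ℝ) ^ 2
        ≤ ((s.card : ℝ) ^ 2 + (q : ℝ) ^ 2 * s.card) / q := by
      rw [le_div_iff₀ (by linarith)]
      nlinarith [hT]
    have hx0 : (0 : ℝ) ≤ (E.card : ℝ) := Nat.cast_nonneg _
    have hTnn : (0 : ℝ) ≤ ∑ lam : F, (N lam : ℝ) ^ 2 :=
      Finset.sum_nonneg fun _ _ => sq_nonneg _
    have hxq : (E.card : ℝ) ≤ q := by
      exact_mod_cast Finset.card_le_univ E
    have hqx : (0 : ℝ) ≤ (q : ℝ) - E.card := by linarith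
    have h1 : (q : ℝ) * (s.card : ℝ) ^ 2
        ≤ (q : ℝ) * (((q : ℝ) - E.card) * ∑ lam : F, (N lam : ℝ) ^ 2) :=
      mul_le_mul_of_nonneg_left hCS (by linarith)
    have h2 : ((q : ℝ) - E.card) * ((q : ℝ) * ∑ lam : F, (N lam : ℝ) ^ 2)
        ≤ ((q : ℝ) - E.card) * ((s.card : ℝ) ^ 2 + (q : ℝ) ^ 2 * s.card) :=
      mul_le_mul_of_nonneg_left hT hqx
    have h3 : (q : ℝ) * (s.card : ℝ) ^ 2
        ≤ ((q : ℝ) - E.card) * ((s.card : ℝ) ^ 2 + (q : ℝ) ^ 2 * s.card) := by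
      calc (q : ℝ) * (s.card : ℝ) ^ 2
          ≤ (q : ℝ) * (((q : ℝ) - E.card) * ∑ lam : F, (N lam : ℝ) ^ 2) := h1
        _ = ((q : ℝ) - E.card) * ((q : ℝ) * ∑ lam : F, (N lam : ℝ) ^ 2) := by ring
        _ ≤ _ := h2
    have h4 : (E.card : ℝ) * (s.card : ℝ) ^ 2 ≤ (q : ℝ) ^ 3 * s.card := by
      nlinarith [h3, mul_nonneg (mul_nonneg hx0 (by positivity : (0:ℝ) ≤ (q:ℝ)^2))
        (by linarith : (0:ℝ) ≤ (s.card : ℝ))]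
    have hP0 : (0 : ℝ) < (s.card : ℝ) := by linarith
    have h5 : ((E.card : ℝ) * s.card) * s.card ≤ (q : ℝ) ^ 3 * s.card := by
      nlinarith [h4]
    exact le_of_mul_le_mul_right h5 hP0
  -- conclude
  have hPpos : (0 : ℝ) < (F'.card : ℝ) * G.card * H.card := by
    have := hP1
    rw [hscard] at this
    push_cast at this ⊢
    linarith
  rw [le_div_iff₀ hPpos]
  have hs' : (s.card : ℝ) = (F'.card : ℝ) * G.card * H.card := by
    rw [hscard]; push_cast; ring
  rw [← hs']
  calc (E.card : ℝ) * (s.card : ℝ) ≤ (q : ℝ) ^ 3 := hEq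
    _ ≤ 16 * (q : ℝ) ^ 3 := by nlinarith [hq1]
end

section
/- Let F_q be a finite field with q elements, χ a nontrivial multiplicative character of F_q (extended by χ(0) = 0), λ ∈ F_q*, and A, B ⊆ F_q. Then |Σ_{a∈A} Σ_{b∈B} χ(ab - λ)| ≤ (q·|A||B|)^{1/2}. -/
open Finset Complex
open scoped ComplexConjugate

section aux
variable {F : Type} [Field F] [Fintype F] [DecidableEq F]

private lemma chi_conj (χ : MulChar F ℂ) (a : F) : conj (χ a) = χ a⁻¹ := by
  rw [starRingEnd_apply, MulChar.star_apply', MulChar.inv_apply']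

private lemma key_sum (χ : MulChar F ℂ) (hχ : χ ≠ 1) {lam b b' : F} (hlam : lam ≠ 0)
    (hb : b ≠ 0) (hb' : b' ≠ 0) (hne : b ≠ b') :
    ∑ a : F, χ (a * b - lam) * conj (χ (a * b' - lam)) = -χ (b * b'⁻¹) := by
  have hterm : ∀ a : F, χ (a * b - lam) * conj (χ (a * b' - lam))
      = χ ((a * b - lam) * (a * b' - lam)⁻¹) := fun a => by rw [chi_conj, map_mul]
  simp_rw [hterm]
  have hsub : b - b' ≠ 0 := sub_ne_zero.mpr hne
  have key : ∑ a ∈ Finset.univ.erase (lam * b'⁻¹), χ ((a * b - lam) * (a * b' - lam)⁻¹)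
      = ∑ u ∈ Finset.univ.erase (b * b'⁻¹), χ u := by
    apply Finset.sum_nbij' (fun a => (a * b - lam) * (a * b' - lam)⁻¹)
      (fun u => lam * (u - 1) * (u * b' - b)⁻¹)
    · intro a ha
      have ha' : a * b' - lam ≠ 0 := by
        intro h
        exact (Finset.mem_erase.mp ha).1 (by field_simp; linear_combination h)
      simp only [Finset.mem_erase, Finset.mem_univ, and_true]
      intro h
      apply hne
      field_simp at h
      have : lam * b = lam * b' := by linear_combination h
      exact mul_left_cancel₀ hlam this
    · intro u hu
      have hu' : u * b' - b ≠ 0 := by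
        intro h
        exact (Finset.mem_erase.mp hu).1 (by field_simp; linear_combination h)
      simp only [Finset.mem_erase, Finset.mem_univ, and_true]
      intro h
      apply hne
      field_simp at h
      have : lam * b = lam * b' := by linear_combination lam * h
      exact mul_left_cancel₀ hlam this
    · intro a ha
      have ha' : a * b' - lam ≠ 0 := by
        intro h
        exact (Finset.mem_erase.mp ha).1 (by field_simp; linear_combination h)
      have h2 : (a * b - lam) * (a * b' - lam)⁻¹ * b' - b ≠ 0 := by
        intro h
        apply hne
        field_simp at h
        have : lam * b = lam * b' := by linear_combination h
        exact mul_left_cancel₀ hlam this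
      have h3 : lam * b - lam * b' ≠ 0 := by
        have hz := mul_ne_zero hlam hsub
        intro h; apply hz; linear_combination h
      field_simp
      rw [div_eq_iff (by intro h; apply h3; linear_combination h)]
      ring
    · intro u hu
      have hu' : u * b' - b ≠ 0 := by
        intro h
        exact (Finset.mem_erase.mp hu).1 (by field_simp; linear_combination h)
      have h2 : lam * (u - 1) * (u * b' - b)⁻¹ * b' - lam ≠ 0 := by
        intro h
        apply hne
        field_simp at h
        have : lam * b = lam * b' := by linear_combination h
        exact mul_left_cancel₀ hlam this
      have h3 : lam * b - lam * b' ≠ 0 := by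
        have hz := mul_ne_zero hlam hsub
        intro h; apply hz; linear_combination h
      field_simp
      rw [div_eq_iff (by intro h; apply h3; linear_combination lam * h)]
      ring
    · intro a ha; rfl
  have h0 : χ (((lam * b'⁻¹) * b - lam) * ((lam * b'⁻¹) * b' - lam)⁻¹) = 0 := by
    have : (lam * b'⁻¹) * b' - lam = 0 := by field_simp; ring
    rw [this, inv_zero, mul_zero, MulChar.map_zero]
  calc ∑ a : F, χ ((a * b - lam) * (a * b' - lam)⁻¹)
      = ∑ a ∈ Finset.univ.erase (lam * b'⁻¹), χ ((a * b - lam) * (a * b' - lam)⁻¹) := by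
        rw [← Finset.sum_erase_add _ _ (Finset.mem_univ (lam * b'⁻¹)), h0, add_zero]
    _ = ∑ u ∈ Finset.univ.erase (b * b'⁻¹), χ u := key
    _ = -χ (b * b'⁻¹) := by
        have := Finset.sum_erase_add Finset.univ (fun u => χ u) (Finset.mem_univ (b * b'⁻¹))
        rw [MulChar.sum_eq_zero_of_ne_one hχ] at this
        linear_combination this
        
private lemma chi_mul_conj (χ : MulChar F ℂ) {a : F} (ha : a ≠ 0) :
    χ a * conj (χ a) = 1 := by
  rw [chi_conj, ← map_mul, mul_inv_cancel₀ ha, map_one]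

private lemma sum_shift (χ : MulChar F ℂ) (hχ : χ ≠ 1) (lam : F) {b : F} (hb : b ≠ 0) :
    ∑ a : F, χ (a * b - lam) = 0 := by
  rw [← MulChar.sum_eq_zero_of_ne_one hχ]
  exact Fintype.sum_equiv ((Equiv.mulRight₀ b hb).trans (Equiv.subRight lam)) _ _ (fun a => rfl)

private lemma J_diag (χ : MulChar F ℂ) {lam b : F} (hb : b ≠ 0) :
    ∑ a : F, χ (a * b - lam) * conj (χ (a * b - lam))
      = (Fintype.card F : ℂ) - 1 := by
  rw [← Finset.sum_erase_add _ _ (Finset.mem_univ (lam * b⁻¹))]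
  have h0 : (lam * b⁻¹) * b - lam = 0 := by field_simp; ring
  rw [h0, MulChar.map_zero, zero_mul, add_zero]
  rw [Finset.sum_congr rfl (fun a ha => chi_mul_conj χ (show a * b - lam ≠ 0 by
        intro h
        exact (Finset.mem_erase.mp ha).1 (by field_simp; linear_combination h)))]
  rw [Finset.sum_const, Finset.card_erase_of_mem (Finset.mem_univ _), Finset.card_univ]
  rw [nsmul_eq_mul, mul_one, Nat.cast_sub Fintype.card_pos, Nat.cast_one]

private lemma J_zero_left (χ : MulChar F ℂ) (hχ : χ ≠ 1) {lam b' : F} (hb' : b' ≠ 0) :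
    ∑ a : F, χ (a * 0 - lam) * conj (χ (a * b' - lam)) = 0 := by
  simp only [mul_zero, zero_sub]
  rw [← Finset.mul_sum, ← map_sum, sum_shift χ hχ lam hb', map_zero, mul_zero]

private lemma J_zero_right (χ : MulChar F ℂ) (hχ : χ ≠ 1) {lam b : F} (hb : b ≠ 0) :
    ∑ a : F, χ (a * b - lam) * conj (χ (a * 0 - lam)) = 0 := by
  simp only [mul_zero, zero_sub]
  rw [← Finset.sum_mul, sum_shift χ hχ lam hb, zero_mul]

private lemma J00 (χ : MulChar F ℂ) {lam : F} (hlam : lam ≠ 0) :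
    ∑ a : F, χ (a * 0 - lam) * conj (χ (a * 0 - lam)) = (Fintype.card F : ℂ) := by
  simp only [mul_zero, zero_sub]
  rw [Finset.sum_const, Finset.card_univ, chi_mul_conj χ (neg_ne_zero.mpr hlam),
    nsmul_eq_mul, mul_one]

private lemma core (χ : MulChar F ℂ) (hχ : χ ≠ 1) {lam : F} (hlam : lam ≠ 0)
    {B' : Finset F} (hB' : (0:F) ∉ B') :
    (∑ b ∈ B', ∑ b' ∈ B', ∑ a : F, χ (a * b - lam) * conj (χ (a * b' - lam))).re
      ≤ (Fintype.card F : ℝ) * B'.card := by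
  have hnz : ∀ b ∈ B', b ≠ 0 := fun b hb h => hB' (h ▸ hb)
  have step : ∀ b ∈ B', ∀ b' ∈ B', ∑ a : F, χ (a * b - lam) * conj (χ (a * b' - lam))
      = (if b = b' then (Fintype.card F : ℂ) else 0) - χ b * conj (χ b') := by
    intro b hb b' hb'
    have hb0 := hnz b hb
    have hb'0 := hnz b' hb'
    have hx : χ b * conj (χ b') = χ (b * b'⁻¹) := by rw [chi_conj, map_mul]
    rcases eq_or_ne b b' with rfl | hne
    · rw [J_diag χ hb0, if_pos rfl, hx, mul_inv_cancel₀ hb0, map_one]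
    · rw [key_sum χ hχ hlam hb0 hb'0 hne, if_neg hne, hx, zero_sub]
  rw [Finset.sum_congr rfl (fun b hb => Finset.sum_congr rfl (step b hb))]
  have expand : ∑ b ∈ B', ∑ b' ∈ B',
        ((if b = b' then (Fintype.card F : ℂ) else 0) - χ b * conj (χ b'))
      = (Fintype.card F : ℂ) * B'.card
        - (∑ b ∈ B', χ b) * conj (∑ b ∈ B', χ b) := by
    have h1 : ∀ b ∈ B', (∑ b' ∈ B', if b = b' then (Fintype.card F : ℂ) else 0)
        = (Fintype.card F : ℂ) := by
      intro b hb; rw [Finset.sum_ite_eq]; exact if_pos hb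
    have h2 : ∀ b : F, ∑ b' ∈ B', χ b * conj (χ b') = χ b * conj (∑ b' ∈ B', χ b') := by
      intro b; rw [← Finset.mul_sum, map_sum (starRingEnd ℂ)]
    simp_rw [Finset.sum_sub_distrib]
    rw [Finset.sum_congr rfl (fun b hb => by rw [h1 b hb]),
      Finset.sum_congr rfl (fun b (_ : b ∈ B') => h2 b)]
    rw [Finset.sum_const, nsmul_eq_mul, ← Finset.sum_mul]
    ring
  rw [expand, Complex.sub_re]
  have h3 : ((Fintype.card F : ℂ) * (B'.card : ℂ)).re
      = (Fintype.card F : ℝ) * B'.card := by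
    norm_cast
  have hpos : 0 ≤ ((∑ b ∈ B', χ b) * conj (∑ b ∈ B', χ b)).re := by
    rw [Complex.mul_conj, Complex.ofReal_re]
    exact Complex.normSq_nonneg _
  rw [h3]
  linarith

private lemma T_bound (χ : MulChar F ℂ) (hχ : χ ≠ 1) {lam : F} (hlam : lam ≠ 0) (B : Finset F) :
    ∑ a : F, (‖∑ b ∈ B, χ (a * b - lam)‖)^2
      ≤ (Fintype.card F : ℝ) * B.card := by
  have habs : ∀ a : F, (‖∑ b ∈ B, χ (a * b - lam)‖)^2
      = ((∑ b ∈ B, χ (a * b - lam)) * conj (∑ b' ∈ B, χ (a * b' - lam))).re := by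
    intro a
    rw [Complex.mul_conj, Complex.ofReal_re, Complex.normSq_eq_norm_sq]
  simp_rw [habs]
  rw [← Complex.re_sum]
  have swap : ∑ a : F, (∑ b ∈ B, χ (a * b - lam)) * conj (∑ b' ∈ B, χ (a * b' - lam))
      = ∑ b ∈ B, ∑ b' ∈ B, ∑ a : F, χ (a * b - lam) * conj (χ (a * b' - lam)) := by
    have h1 : ∀ a : F, (∑ b ∈ B, χ (a * b - lam)) * conj (∑ b' ∈ B, χ (a * b' - lam))
        = ∑ b ∈ B, ∑ b' ∈ B, χ (a * b - lam) * conj (χ (a * b' - lam)) := by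
      intro a
      rw [map_sum (starRingEnd ℂ), Finset.sum_mul_sum]
    rw [Finset.sum_congr rfl (fun a _ => h1 a), Finset.sum_comm]
    exact Finset.sum_congr rfl (fun b _ => Finset.sum_comm)
  rw [swap]
  by_cases h0 : (0:F) ∈ B
  · obtain ⟨B₀, hB₀0, hBeq⟩ : ∃ B₀, (0:F) ∉ B₀ ∧ B = insert 0 B₀ :=
      ⟨B.erase 0, Finset.notMem_erase _ _, (Finset.insert_erase h0).symm⟩
    subst hBeq
    rw [Finset.sum_insert hB₀0, Finset.sum_insert hB₀0, J00 χ hlam,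
      Finset.sum_eq_zero (fun b' hb' => J_zero_left χ hχ (fun h => hB₀0 (h ▸ hb'))), add_zero]
    have hrow : ∀ b ∈ B₀, ∑ b' ∈ insert 0 B₀, ∑ a : F, χ (a*b-lam) * conj (χ (a*b'-lam))
        = ∑ b' ∈ B₀, ∑ a : F, χ (a*b-lam) * conj (χ (a*b'-lam)) := by
      intro b hb
      rw [Finset.sum_insert hB₀0, J_zero_right χ hχ (fun h => hB₀0 (h ▸ hb)), zero_add]
    rw [Finset.sum_congr rfl hrow, Complex.add_re]
    have hcore := core χ hχ hlam hB₀0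
    rw [Finset.card_insert_of_notMem hB₀0]
    have hq : ((Fintype.card F : ℂ)).re = (Fintype.card F : ℝ) := by norm_cast
    rw [hq]
    have hr : (Fintype.card F : ℝ) * ((B₀.card + 1 : ℕ) : ℝ)
        = (Fintype.card F : ℝ) + (Fintype.card F : ℝ) * B₀.card := by push_cast; ring
    rw [hr]
    linarith
  · exact core χ hχ hlam h0

end aux

/-- For a finite field `F` with `q` elements, a nontrivial multiplicative character `χ`
(extended by `χ(0) = 0`), nonzero `λ`, and sets `A, B ⊆ F`,
`|∑_{a∈A} ∑_{b∈B} χ(ab - λ)| ≤ (q|A||B|)^{1/2}`. -/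
theorem char_sum_ab_shift (F : Type) [Field F] [Fintype F] [DecidableEq F]
    (χ : MulChar F ℂ) (hχ : χ ≠ 1) (lam : F) (hlam : lam ≠ 0) (A B : Finset F) :
    ‖∑ a ∈ A, ∑ b ∈ B, χ (a * b - lam)‖ ≤
      Real.sqrt ((Fintype.card F : ℝ) * (A.card * B.card)) := by
  have hA : ‖∑ a ∈ A, ∑ b ∈ B, χ (a * b - lam)‖
      ≤ ∑ a ∈ A, ‖∑ b ∈ B, χ (a * b - lam)‖ :=
    norm_sum_le _ _
  have cs : (∑ a ∈ A, ‖∑ b ∈ B, χ (a * b - lam)‖)^2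
      ≤ (A.card : ℝ) * ∑ a ∈ A, (‖∑ b ∈ B, χ (a * b - lam)‖)^2 :=
    sq_sum_le_card_mul_sum_sq
  have ext : ∑ a ∈ A, (‖∑ b ∈ B, χ (a * b - lam)‖)^2
      ≤ ∑ a : F, (‖∑ b ∈ B, χ (a * b - lam)‖)^2 :=
    Finset.sum_le_sum_of_subset_of_nonneg (Finset.subset_univ A)
      (fun _ _ _ => by positivity)
  have tb := T_bound χ hχ hlam B
  have h2 : (‖∑ a ∈ A, ∑ b ∈ B, χ (a * b - lam)‖)^2
      ≤ (Fintype.card F : ℝ) * (A.card * B.card) := by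
    calc (‖∑ a ∈ A, ∑ b ∈ B, χ (a * b - lam)‖)^2
        ≤ (∑ a ∈ A, ‖∑ b ∈ B, χ (a * b - lam)‖)^2 := by
          apply pow_le_pow_left₀ (norm_nonneg _) hA
      _ ≤ (A.card : ℝ) * ∑ a ∈ A, (‖∑ b ∈ B, χ (a * b - lam)‖)^2 := cs
      _ ≤ (A.card : ℝ) * ((Fintype.card F : ℝ) * B.card) := by
          apply mul_le_mul_of_nonneg_left (le_trans ext tb) (by positivity)
      _ = (Fintype.card F : ℝ) * (A.card * B.card) := by ring
  have h3 := Real.sqrt_le_sqrt h2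
  rwa [Real.sqrt_sq (norm_nonneg _)] at h3
end

section
/- Let F_p be a prime field and X, Y ⊆ F_p* nonempty with |Y| ≥ |X|. Let U = {x + y : x ∈ X, y ∈ Y} and V = {xy : x ∈ X, y ∈ Y}. Then there is an absolute constant C_0 > 0 such that |U|·|V| ≥ C_0·min{ p·|Y|, |X|^2·|Y|^2/p }. -/
open Finset Complex

namespace GaraevAux

variable {p : ℕ} [hp : Fact p.Prime]

instance : NeZero p := ⟨hp.out.ne_zero⟩

noncomputable def ψ (p : ℕ) [NeZero p] : AddChar (ZMod p) ℂ := ZMod.stdAddChar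

lemma psi_abs (x : ZMod p) : ‖ψ p x‖ = 1 := by
  rw [ψ, ZMod.stdAddChar_apply]; exact Circle.norm_coe _

lemma psi_conj (x : ZMod p) : (starRingEnd ℂ) (ψ p x) = ψ p (-x) := by
  have h1 : ψ p x * ψ p (-x) = 1 := by
    rw [← AddChar.map_add_eq_mul, add_neg_cancel, AddChar.map_zero_eq_one]
  have h2 : (starRingEnd ℂ) (ψ p x) * ψ p x = 1 := by
    rw [mul_comm, Complex.mul_conj, Complex.normSq_eq_norm_sq, psi_abs]
    norm_num
  calc (starRingEnd ℂ) (ψ p x) = (starRingEnd ℂ) (ψ p x) * (ψ p x * ψ p (-x)) := by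
        rw [h1, mul_one]
    _ = ((starRingEnd ℂ) (ψ p x) * ψ p x) * ψ p (-x) := by ring
    _ = ψ p (-x) := by rw [h2, one_mul]

lemma orth (x : ZMod p) :
    ∑ t : ZMod p, ψ p (t * x) = if x = 0 then (p : ℂ) else 0 := by
  have hprim : (ψ p).IsPrimitive := ZMod.isPrimitive_stdAddChar p
  have := AddChar.sum_mulShift (ψ := ψ p) x hprim
  rw [ZMod.card] at this
  rw [this]
  split_ifs <;> simp

noncomputable def S (A : Finset (ZMod p)) (t : ZMod p) : ℂ := ∑ a ∈ A, ψ p (t * a)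

lemma parseval (A : Finset (ZMod p)) :
    ∑ t : ZMod p, (‖S A t‖) ^ 2 = p * A.card := by
  have key : ∑ t : ZMod p, ((Complex.normSq (S A t) : ℝ) : ℂ) = (p : ℂ) * A.card := by
    have h1 : ∀ t : ZMod p, ((Complex.normSq (S A t) : ℝ) : ℂ)
        = ∑ a ∈ A, ∑ b ∈ A, ψ p (t * (a - b)) := by
      intro t
      rw [← Complex.mul_conj, S, map_sum, Finset.sum_mul_sum]
      refine Finset.sum_congr rfl fun a _ => Finset.sum_congr rfl fun b _ => ?_
      rw [psi_conj, ← AddChar.map_add_eq_mul]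
      congr 1; ring
    simp_rw [h1]
    rw [Finset.sum_comm]
    have h2 : ∀ a ∈ A, ∑ t : ZMod p, ∑ b ∈ A, ψ p (t * (a - b)) = (p : ℂ) := by
      intro a ha
      rw [Finset.sum_comm]
      have : ∀ b ∈ A, ∑ t : ZMod p, ψ p (t * (a - b))
          = if a = b then (p : ℂ) else 0 := by
        intro b _
        rw [orth]
        simp only [sub_eq_zero]
      rw [Finset.sum_congr rfl this, Finset.sum_ite_eq A a (fun _ => (p : ℂ)), if_pos ha]
    rw [Finset.sum_congr rfl h2, Finset.sum_const, nsmul_eq_mul, mul_comm]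
  have := congrArg Complex.re key
  rw [Complex.re_sum] at this
  simp only [Complex.ofReal_re] at this
  calc ∑ t : ZMod p, (‖S A t‖) ^ 2
      = ∑ t : ZMod p, Complex.normSq (S A t) := by
        simp_rw [Complex.sq_norm]
    _ = p * A.card := by
        rw [this]; simp

noncomputable def G (C D : Finset (ZMod p)) (t : ZMod p) : ℂ :=
  ∑ c ∈ C, ∑ d ∈ D, ψ p (t * (c * d))

lemma S_zero (A : Finset (ZMod p)) : S A 0 = A.card := by
  simp [S]

lemma G_zero (C D : Finset (ZMod p)) : G C D 0 = C.card * D.card := by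
  simp [G]

lemma G_bound {t : ZMod p} (ht : t ≠ 0) (C D : Finset (ZMod p)) :
    ‖G C D t‖ ≤ Real.sqrt (C.card * (p * D.card)) := by
  have hG : G C D t = ∑ c ∈ C, S D (t * c) := by
    unfold G S
    refine Finset.sum_congr rfl fun c _ => Finset.sum_congr rfl fun d _ => ?_
    rw [mul_assoc]
  have h1 : ‖G C D t‖ ≤ ∑ c ∈ C, ‖S D (t * c)‖ := by
    rw [hG]; exact norm_sum_le _ _
  have h2 : (∑ c ∈ C, ‖S D (t * c)‖) ^ 2
      ≤ C.card * ∑ c ∈ C, (‖S D (t * c)‖) ^ 2 :=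
    sq_sum_le_card_mul_sum_sq
  have h3 : ∑ c ∈ C, (‖S D (t * c)‖) ^ 2 ≤ (p : ℝ) * D.card := by
    have hinj : Set.InjOn (fun c => t * c) C := fun a _ b _ h => by
      exact mul_left_cancel₀ ht h
    rw [← Finset.sum_image (f := fun x => (‖S D x‖) ^ 2)
      (g := fun c => t * c) (fun a ha b hb h => hinj ha hb h)]
    calc ∑ x ∈ C.image (fun c => t * c), (‖S D x‖) ^ 2
        ≤ ∑ x : ZMod p, (‖S D x‖) ^ 2 :=
          Finset.sum_le_univ_sum_of_nonneg fun x => sq_nonneg _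
      _ = (p : ℝ) * D.card := parseval D
  have habs : (‖G C D t‖) ^ 2 ≤ (C.card : ℝ) * ((p : ℝ) * D.card) := by
    calc (‖G C D t‖) ^ 2 ≤ (∑ c ∈ C, ‖S D (t * c)‖) ^ 2 := by
          apply pow_le_pow_left₀ (norm_nonneg _) h1
      _ ≤ C.card * ∑ c ∈ C, (‖S D (t * c)‖) ^ 2 := h2
      _ ≤ (C.card : ℝ) * ((p : ℝ) * D.card) := by
          apply mul_le_mul_of_nonneg_left h3 (Nat.cast_nonneg _)
  exact (Real.le_sqrt (norm_nonneg _) (by positivity)).2 habs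

lemma count_eq (A B C D : Finset (ZMod p)) :
    (p : ℂ) * ((((A ×ˢ B) ×ˢ C ×ˢ D).filter
        fun q => q.1.1 + q.1.2 = q.2.1 * q.2.2).card : ℂ)
      = ∑ t : ZMod p, S A t * S B t * G C D (-t) := by
  have point : ∀ (t a b c d : ZMod p),
      ψ p (t * a) * ψ p (t * b) * ψ p (-t * (c * d))
        = ψ p (t * (a + b - c * d)) := by
    intro t a b c d
    rw [← AddChar.map_add_eq_mul, ← AddChar.map_add_eq_mul]
    congr 1; ring
  have expand : ∀ t : ZMod p, S A t * S B t * G C D (-t)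
      = ∑ q ∈ (A ×ˢ B) ×ˢ C ×ˢ D,
          ψ p (t * (q.1.1 + q.1.2 - q.2.1 * q.2.2)) := by
    intro t
    have hSS : S A t * S B t = ∑ q ∈ A ×ˢ B, ψ p (t * (q.1 + q.2)) := by
      rw [S, S, Finset.sum_mul_sum, Finset.sum_product]
      refine Finset.sum_congr rfl fun a _ => Finset.sum_congr rfl fun b _ => ?_
      rw [← AddChar.map_add_eq_mul]
      congr 1; ring
    have hG : G C D (-t) = ∑ r ∈ C ×ˢ D, ψ p (-t * (r.1 * r.2)) := by
      rw [G, Finset.sum_product]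
    rw [hSS, hG, Finset.sum_mul_sum]
    conv_rhs => rw [Finset.sum_product]
    refine Finset.sum_congr rfl fun q _ => Finset.sum_congr rfl fun r _ => ?_
    rw [← AddChar.map_add_eq_mul]
    congr 1; ring
  rw [Finset.sum_congr rfl fun t _ => expand t, Finset.sum_comm]
  have horth : ∀ q ∈ (A ×ˢ B) ×ˢ C ×ˢ D,
      ∑ t : ZMod p, ψ p (t * (q.1.1 + q.1.2 - q.2.1 * q.2.2))
        = if q.1.1 + q.1.2 = q.2.1 * q.2.2 then (p : ℂ) else 0 := by
    intro q _
    rw [orth]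
    simp only [sub_eq_zero]
  rw [Finset.sum_congr rfl horth, Finset.sum_ite, Finset.sum_const, Finset.sum_const]
  simp [mul_comm]

lemma sarkozy (A B C D : Finset (ZMod p)) :
    (((((A ×ˢ B) ×ˢ C ×ˢ D).filter
        fun q => q.1.1 + q.1.2 = q.2.1 * q.2.2).card : ℝ))
      ≤ (A.card : ℝ) * B.card * C.card * D.card / p
        + Real.sqrt ((p : ℝ) * A.card * B.card * C.card * D.card) := by
  classical
  set T : ℕ := (((A ×ˢ B) ×ˢ C ×ˢ D).filter
      fun q => q.1.1 + q.1.2 = q.2.1 * q.2.2).card with hT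
  have hp0 : (0 : ℝ) < p := by exact_mod_cast hp.out.pos
  -- split off t = 0
  have hsplit : ((p : ℂ)) * T - (A.card : ℂ) * B.card * (C.card * D.card)
      = ∑ t ∈ (univ : Finset (ZMod p)) \ {0}, S A t * S B t * G C D (-t) := by
    have h0 : ∑ t : ZMod p, S A t * S B t * G C D (-t)
        = (∑ t ∈ (univ : Finset (ZMod p)) \ {0}, S A t * S B t * G C D (-t))
          + S A 0 * S B 0 * G C D (-0) :=
      (Finset.sum_eq_sum_sdiff_singleton_add (Finset.mem_univ 0) _)
    rw [count_eq, h0] at *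
    rw [neg_zero, S_zero, S_zero, G_zero]
    ring
  -- bound the error sum
  have herr : ‖∑ t ∈ (univ : Finset (ZMod p)) \ {0},
      S A t * S B t * G C D (-t)‖
      ≤ (p : ℝ) * Real.sqrt ((A.card : ℝ) * B.card)
          * Real.sqrt ((C.card : ℝ) * ((p : ℝ) * D.card)) := by
    calc ‖∑ t ∈ (univ : Finset (ZMod p)) \ {0},
          S A t * S B t * G C D (-t)‖
        ≤ ∑ t ∈ (univ : Finset (ZMod p)) \ {0},
            ‖S A t * S B t * G C D (-t)‖ := norm_sum_le _ _
      _ ≤ ∑ t ∈ (univ : Finset (ZMod p)) \ {0},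
            ‖S A t‖ * ‖S B t‖
              * Real.sqrt ((C.card : ℝ) * ((p : ℝ) * D.card)) := by
          refine Finset.sum_le_sum fun t ht => ?_
          have ht0 : t ≠ 0 := by
            simpa using (Finset.mem_sdiff.1 ht).2
          rw [norm_mul, norm_mul]
          refine mul_le_mul_of_nonneg_left ?_
            (mul_nonneg (norm_nonneg _) (norm_nonneg _))
          exact G_bound (neg_ne_zero.2 ht0) C D
      _ = (∑ t ∈ (univ : Finset (ZMod p)) \ {0},
            ‖S A t‖ * ‖S B t‖)
              * Real.sqrt ((C.card : ℝ) * ((p : ℝ) * D.card)) := by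
          rw [Finset.sum_mul]
      _ ≤ ((p : ℝ) * Real.sqrt ((A.card : ℝ) * B.card))
              * Real.sqrt ((C.card : ℝ) * ((p : ℝ) * D.card)) := by
          refine mul_le_mul_of_nonneg_right ?_ (Real.sqrt_nonneg _)
          have hCS : (∑ t ∈ (univ : Finset (ZMod p)) \ {0},
              ‖S A t‖ * ‖S B t‖) ^ 2
              ≤ (∑ t ∈ (univ : Finset (ZMod p)) \ {0}, ‖S A t‖ ^ 2)
                * ∑ t ∈ (univ : Finset (ZMod p)) \ {0}, ‖S B t‖ ^ 2 :=
            Finset.sum_mul_sq_le_sq_mul_sq _ _ _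
          have hA : ∑ t ∈ (univ : Finset (ZMod p)) \ {0}, ‖S A t‖ ^ 2
              ≤ (p : ℝ) * A.card := by
            rw [← parseval A]
            exact Finset.sum_le_sum_of_subset_of_nonneg (Finset.subset_univ _)
              fun i _ _ => sq_nonneg _
          have hB : ∑ t ∈ (univ : Finset (ZMod p)) \ {0}, ‖S B t‖ ^ 2
              ≤ (p : ℝ) * B.card := by
            rw [← parseval B]
            exact Finset.sum_le_sum_of_subset_of_nonneg (Finset.subset_univ _)
              fun i _ _ => sq_nonneg _
          have hsum : (∑ t ∈ (univ : Finset (ZMod p)) \ {0},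
              ‖S A t‖ * ‖S B t‖) ^ 2
              ≤ ((p : ℝ) * A.card) * ((p : ℝ) * B.card) := by
            refine hCS.trans (mul_le_mul hA hB (Finset.sum_nonneg fun i _ => sq_nonneg _)
              (by positivity))
          have h1 : (∑ t ∈ (univ : Finset (ZMod p)) \ {0},
              ‖S A t‖ * ‖S B t‖)
              ≤ Real.sqrt (((p : ℝ) * A.card) * ((p : ℝ) * B.card)) :=
            (Real.le_sqrt (Finset.sum_nonneg fun i _ =>
              mul_nonneg (norm_nonneg _) (norm_nonneg _))
              (by positivity)).2 hsum
          refine h1.trans (le_of_eq ?_)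
          rw [show ((p : ℝ) * A.card) * ((p : ℝ) * B.card)
              = (p : ℝ) ^ 2 * ((A.card : ℝ) * B.card) by ring,
            Real.sqrt_mul (by positivity), Real.sqrt_sq hp0.le]
  -- combine
  have hreal : (p : ℝ) * T - (A.card : ℝ) * B.card * (C.card * D.card)
      ≤ (p : ℝ) * Real.sqrt ((A.card : ℝ) * B.card)
          * Real.sqrt ((C.card : ℝ) * ((p : ℝ) * D.card)) := by
    have : ‖(p : ℂ) * T - (A.card : ℂ) * B.card * (C.card * D.card)‖
        ≤ (p : ℝ) * Real.sqrt ((A.card : ℝ) * B.card)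
          * Real.sqrt ((C.card : ℝ) * ((p : ℝ) * D.card)) := by
      rw [hsplit]; exact herr
    have hz : ((p : ℂ)) * T - (A.card : ℂ) * B.card * (C.card * D.card)
        = (((p : ℝ) * T - (A.card : ℝ) * B.card * (C.card * D.card) : ℝ) : ℂ) := by
      push_cast; ring
    rw [hz, Complex.norm_real, Real.norm_eq_abs] at this
    exact (le_abs_self _).trans this
  have hE : (p : ℝ) * Real.sqrt ((A.card : ℝ) * B.card)
      * Real.sqrt ((C.card : ℝ) * ((p : ℝ) * D.card))
      = (p : ℝ) * Real.sqrt ((p : ℝ) * A.card * B.card * C.card * D.card) := by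
    rw [mul_assoc, ← Real.sqrt_mul (by positivity)]
    congr 2
    ring
  rw [hE] at hreal
  have h2 : (T : ℝ) * p ≤ (A.card : ℝ) * B.card * C.card * D.card
      + Real.sqrt ((p : ℝ) * A.card * B.card * C.card * D.card) * p := by
    nlinarith [hreal]
  calc (T : ℝ) = (T : ℝ) * p / p := by field_simp
    _ ≤ ((A.card : ℝ) * B.card * C.card * D.card
          + Real.sqrt ((p : ℝ) * A.card * B.card * C.card * D.card) * p) / p := by
        exact div_le_div_of_nonneg_right h2 hp0.le
    _ = (A.card : ℝ) * B.card * C.card * D.card / p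
          + Real.sqrt ((p : ℝ) * A.card * B.card * C.card * D.card) := by
        field_simp

lemma lower (X Y : Finset (ZMod p)) (hX0 : (0 : ZMod p) ∉ X) :
    X.card * X.card * Y.card ≤
      ((((X.biUnion fun x => Y.image fun y => x + y) ×ˢ X.image fun x => -x) ×ˢ
        (X.biUnion fun x => Y.image fun y => x * y) ×ˢ X.image fun x => x⁻¹).filter
        fun q => q.1.1 + q.1.2 = q.2.1 * q.2.2).card := by
  classical
  have hcard : X.card * X.card * Y.card = ((X ×ˢ X) ×ˢ Y).card := by
    rw [Finset.card_product, Finset.card_product]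
  rw [hcard]
  apply Finset.card_le_card_of_injOn
    (fun r => ((r.1.2 + r.2, -r.1.2), (r.1.1 * r.2, r.1.1⁻¹)))
  · rintro ⟨⟨x1, x2⟩, y⟩ hr
    simp only [Finset.mem_coe, Finset.mem_product] at hr
    obtain ⟨⟨hx1, hx2⟩, hy⟩ := hr
    have hx1ne : x1 ≠ 0 := fun h => hX0 (h ▸ hx1)
    simp only [Finset.mem_coe, Finset.mem_filter, Finset.mem_product, Finset.mem_biUnion, Finset.mem_image]
    refine ⟨⟨⟨⟨x2, hx2, ⟨y, hy, rfl⟩⟩, ⟨x2, hx2, rfl⟩⟩,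
      ⟨⟨x1, hx1, ⟨y, hy, rfl⟩⟩, ⟨x1, hx1, rfl⟩⟩⟩, ?_⟩
    show (x2 + y) + -x2 = x1 * y * x1⁻¹
    rw [mul_comm x1 y, mul_assoc, mul_inv_cancel₀ hx1ne, mul_one]
    ring
  · rintro ⟨⟨x1, x2⟩, y⟩ _ ⟨⟨x1', x2'⟩, y'⟩ _ h
    simp only [Prod.mk.injEq] at h
    obtain ⟨⟨h1, h2⟩, h3, h4⟩ := h
    have e2 : x2 = x2' := neg_injective h2
    have e1 : x1 = x1' := inv_injective h4
    have e3 : y = y' := by rw [e2] at h1; exact add_left_cancel h1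
    simp [e1, e2, e3]

end GaraevAux

/-- Garaev's sum-product bound: there is an absolute constant `C₀ > 0` such that for any
prime `p` and nonempty `X, Y ⊆ F_p*` with `|Y| ≥ |X|`, the sumset `U = X + Y` and
product set `V = X·Y` satisfy `|U||V| ≥ C₀ min (p |Y|) (|X|²|Y|²/p)`. -/
theorem garaev_sum_product : ∃ C₀ : ℝ, 0 < C₀ ∧
    ∀ (p : ℕ) [Fact p.Prime] (X Y : Finset (ZMod p)),
      X.Nonempty → Y.Nonempty → (0 : ZMod p) ∉ X → (0 : ZMod p) ∉ Y →
      X.card ≤ Y.card →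
      (((X.biUnion fun x => Y.image fun y => x + y).card : ℝ) *
        ((X.biUnion fun x => Y.image fun y => x * y).card : ℝ)) ≥
        C₀ * min ((p : ℝ) * Y.card)
          ((X.card : ℝ) ^ 2 * (Y.card : ℝ) ^ 2 / (p : ℝ)) := by
  classical
  refine ⟨1/4, by norm_num, ?_⟩
  intro p _inst X Y hXne hYne hX0 _hY0 _hXY
  set U : Finset (ZMod p) := X.biUnion fun x => Y.image fun y => x + y with hU
  set V : Finset (ZMod p) := X.biUnion fun x => Y.image fun y => x * y with hV
  have hp0 : (0 : ℝ) < p := by exact_mod_cast (Fact.out : p.Prime).pos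
  have hx : (0 : ℝ) < X.card := by exact_mod_cast hXne.card_pos
  have hy : (0 : ℝ) < Y.card := by exact_mod_cast hYne.card_pos
  have hu0 : (0 : ℝ) ≤ U.card := Nat.cast_nonneg _
  have hv0 : (0 : ℝ) ≤ V.card := Nat.cast_nonneg _
  have hBcard : (X.image fun x => -x).card = X.card :=
    Finset.card_image_of_injective _ neg_injective
  have hDcard : (X.image fun x => x⁻¹).card = X.card :=
    Finset.card_image_of_injective _ inv_injective
  have hlow := GaraevAux.lower (p := p) X Y hX0
  have hsar := GaraevAux.sarkozy (p := p) U (X.image fun x => -x) V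
    (X.image fun x => x⁻¹)
  rw [hBcard, hDcard] at hsar
  have hchain : (X.card : ℝ) * X.card * Y.card
      ≤ (U.card : ℝ) * X.card * V.card * X.card / p
        + Real.sqrt ((p : ℝ) * U.card * X.card * V.card * X.card) := by
    calc (X.card : ℝ) * X.card * Y.card
        = ((X.card * X.card * Y.card : ℕ) : ℝ) := by push_cast; ring
      _ ≤ _ := by exact_mod_cast (Nat.cast_le.2 hlow).trans hsar
  have hsqrt : Real.sqrt ((p : ℝ) * U.card * X.card * V.card * X.card)
      = (X.card : ℝ) * Real.sqrt ((p : ℝ) * ((U.card : ℝ) * V.card)) := by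
    rw [show (p : ℝ) * U.card * X.card * V.card * X.card
        = ((X.card : ℝ)) ^ 2 * ((p : ℝ) * ((U.card : ℝ) * V.card)) by ring,
      Real.sqrt_mul (sq_nonneg _), Real.sqrt_sq hx.le]
  rw [hsqrt] at hchain
  have key' : (X.card : ℝ) * X.card * Y.card * p
      ≤ (U.card : ℝ) * X.card * V.card * X.card
        + (X.card : ℝ) * Real.sqrt ((p : ℝ) * ((U.card : ℝ) * V.card)) * p := by
    have h := mul_le_mul_of_nonneg_right hchain hp0.le
    have heq : ((U.card : ℝ) * X.card * V.card * X.card / p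
        + (X.card : ℝ) * Real.sqrt ((p : ℝ) * ((U.card : ℝ) * V.card))) * p
        = (U.card : ℝ) * X.card * V.card * X.card
          + (X.card : ℝ) * Real.sqrt ((p : ℝ) * ((U.card : ℝ) * V.card)) * p := by
      field_simp
    rw [heq] at h
    exact h
  by_cases hcase : (p : ℝ) * Y.card / 2 ≤ (U.card : ℝ) * V.card
  · have hmin := min_le_left ((p : ℝ) * Y.card)
      ((X.card : ℝ) ^ 2 * (Y.card : ℝ) ^ 2 / (p : ℝ))
    have hpy : (0 : ℝ) ≤ (p : ℝ) * Y.card := by positivity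
    rw [ge_iff_le]
    linarith
  · have hB' : (U.card : ℝ) * V.card ≤ (p : ℝ) * Y.card / 2 := (not_le.1 hcase).le
    have hlt : (U.card : ℝ) * X.card * V.card * X.card
        ≤ ((p : ℝ) * Y.card / 2) * (X.card * X.card) := by nlinarith [mul_pos hx hx]
    have hs : (X.card : ℝ) * Y.card / 2
        ≤ Real.sqrt ((p : ℝ) * ((U.card : ℝ) * V.card)) := by
      nlinarith [key', hlt, mul_pos hx hp0,
        Real.sqrt_nonneg ((p : ℝ) * ((U.card : ℝ) * V.card))]
    have hnn : (0 : ℝ) ≤ (p : ℝ) * ((U.card : ℝ) * V.card) := by positivity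
    have hsq := Real.sq_sqrt hnn
    have hsqv : (X.card : ℝ) * Y.card * ((X.card : ℝ) * Y.card) / 4
        ≤ (p : ℝ) * ((U.card : ℝ) * V.card) := by
      calc (X.card : ℝ) * Y.card * ((X.card : ℝ) * Y.card) / 4
          = ((X.card : ℝ) * Y.card / 2) * ((X.card : ℝ) * Y.card / 2) := by ring
        _ ≤ Real.sqrt ((p : ℝ) * ((U.card : ℝ) * V.card))
              * Real.sqrt ((p : ℝ) * ((U.card : ℝ) * V.card)) :=
            mul_self_le_mul_self (by positivity) hs
        _ = (p : ℝ) * ((U.card : ℝ) * V.card) := by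
            rw [← pow_two, hsq]
    have h4 : (X.card : ℝ) ^ 2 * (Y.card : ℝ) ^ 2 / p ≤ 4 * ((U.card : ℝ) * V.card) := by
      rw [div_le_iff₀ hp0]
      calc (X.card : ℝ) ^ 2 * (Y.card : ℝ) ^ 2
          = 4 * ((X.card : ℝ) * Y.card * ((X.card : ℝ) * Y.card) / 4) := by ring
        _ ≤ 4 * ((p : ℝ) * ((U.card : ℝ) * V.card)) := by linarith
        _ = 4 * ((U.card : ℝ) * V.card) * (p : ℝ) := by ring
    have hmin := min_le_right ((p : ℝ) * Y.card)
      ((X.card : ℝ) ^ 2 * (Y.card : ℝ) ^ 2 / (p : ℝ))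
    rw [ge_iff_le]
    linarith
end
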